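/- arXiv:1304.4408 — 4 statements merged into one kernel-verified Lean document; each statement's English description precedes it below -/
import Mathlib

section
/- Let μ be any probability measure on the interval [λ, 1] with 0 < λ ≤ 1. Then for every bounded measurable ζ : [λ,1] → ℝ, one has ∫ ζ² log(ζ²/∫ζ²dμ) dμ ≤ 4·(osc ζ)², where osc ζ = sup ζ − inf ζ is the oscillation of ζ over [λ,1]. In other words, the logarithmic Sobolev inequality with oscillation holds with constant ρ = 1/8. -/
open MeasureTheory Real

/-- Elementary bound: `t * log t ≤ t * (t - 1)` for `t ≥ 0` (with `0 * log 0 = 0`). -/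
lemma mul_log_le (t : ℝ) (ht : 0 ≤ t) : t * Real.log t ≤ t * (t - 1) := by
  rcases eq_or_lt_of_le ht with h | h
  · simp [← h]
  · exact mul_le_mul_of_nonneg_left (Real.log_le_sub_one_of_pos h) ht

/-- Elementary lower bound: `-1 ≤ t * log t` for `t ≥ 0`. -/
lemma neg_one_le_mul_log (t : ℝ) (ht : 0 ≤ t) : -1 ≤ t * Real.log t := by
  rcases eq_or_lt_of_le ht with h | h
  · simp [← h]
  · have h1 : Real.log t⁻¹ ≤ t⁻¹ - 1 := Real.log_le_sub_one_of_pos (by positivity)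
    rw [Real.log_inv] at h1
    have h2 : t * (-Real.log t) ≤ t * (t⁻¹ - 1) := mul_le_mul_of_nonneg_left h1 ht
    have h3 : t * (t⁻¹ - 1) = 1 - t := by field_simp
    nlinarith

/-- Normalized auxiliary lemma. -/
lemma aux_LSI (lam : ℝ) (hlam1 : lam ≤ 1)
    (μ : Measure ℝ) [IsProbabilityMeasure μ] (hsupp : μ (Set.Icc lam 1)ᶜ = 0)
    (g : ℝ → ℝ) (hmeas : Measurable g) (M : ℝ) (hM : ∀ x, |g x| ≤ M)
    (hnorm : ∫ x, g x ^ 2 ∂μ = 1)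
    (r : ℝ) (hr : ∀ x ∈ Set.Icc lam 1, ∀ y ∈ Set.Icc lam 1, |g x - g y| ≤ r) :
    ∫ x, g x ^ 2 * Real.log (g x ^ 2) ∂μ ≤ 4 * r ^ 2 := by
  have hae : ∀ᵐ x ∂μ, x ∈ Set.Icc lam 1 := by
    rw [ae_iff]
    exact hsupp
  -- integrability of g^2
  have hmeas2 : Measurable fun x => g x ^ 2 := hmeas.pow_const 2
  have hint2 : Integrable (fun x => g x ^ 2) μ := by
    refine Integrable.mono' (integrable_const (M ^ 2)) hmeas2.aestronglyMeasurable ?_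
    filter_upwards with x
    rw [Real.norm_eq_abs, abs_of_nonneg (sq_nonneg _), ← sq_abs]
    exact pow_le_pow_left₀ (abs_nonneg _) (hM x) 2
  -- integrability of g^2 * log g^2
  have hmeasL : Measurable fun x => g x ^ 2 * Real.log (g x ^ 2) :=
    hmeas2.mul (Real.measurable_log.comp hmeas2)
  have hintL : Integrable (fun x => g x ^ 2 * Real.log (g x ^ 2)) μ := by
    refine Integrable.mono' (integrable_const (1 + (M ^ 2) ^ 2)) hmeasL.aestronglyMeasurable ?_
    filter_upwards with x
    rw [Real.norm_eq_abs, abs_le]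
    have h0 : (0:ℝ) ≤ g x ^ 2 := sq_nonneg _
    have hub : g x ^ 2 ≤ M ^ 2 := by
      rw [← sq_abs]; exact pow_le_pow_left₀ (abs_nonneg _) (hM x) 2
    constructor
    · have := neg_one_le_mul_log (g x ^ 2) h0
      nlinarith
    · have := mul_log_le (g x ^ 2) h0
      nlinarith
  -- existence of a point with g a ^ 2 ≤ 1
  have hexa : ∃ a ∈ Set.Icc lam 1, g a ^ 2 ≤ 1 := by
    by_contra hcon
    push_neg at hcon
    have hfint : Integrable (fun x => g x ^ 2 - 1) μ := hint2.sub (integrable_const 1)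
    have hfae : 0 ≤ᵐ[μ] fun x => g x ^ 2 - 1 := by
      filter_upwards [hae] with x hx
      have := hcon x hx
      simp only [Pi.zero_apply]
      linarith
    have h1 : ∫ x, (g x ^ 2 - 1) ∂μ = 0 := by
      rw [integral_sub hint2 (integrable_const 1)]
      simp [hnorm]
    have hsuppf : 0 < μ (Function.support fun x => g x ^ 2 - 1) := by
      set s := Function.support fun x => g x ^ 2 - 1 with hs
      have hsub : sᶜ ⊆ (Set.Icc lam 1)ᶜ := by
        intro x hx
        simp only [hs, Set.mem_compl_iff, Function.mem_support, not_not] at hx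
        intro hxI
        have := hcon x hxI
        nlinarith
      have hnull : μ sᶜ = 0 := measure_mono_null hsub hsupp
      have h2 : (1 : ENNReal) ≤ μ s := by
        calc (1 : ENNReal) = μ Set.univ := (measure_univ).symm
          _ = μ (s ∪ sᶜ) := by rw [Set.union_compl_self]
          _ ≤ μ s + μ sᶜ := measure_union_le _ _
          _ = μ s := by rw [hnull, add_zero]
      exact lt_of_lt_of_le zero_lt_one h2
    have := (integral_pos_iff_support_of_nonneg_ae hfae hfint).mpr hsuppf
    rw [h1] at this
    exact lt_irrefl 0 this
  -- existence of a point with 1 ≤ g b ^ 2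
  have hexb : ∃ b ∈ Set.Icc lam 1, 1 ≤ g b ^ 2 := by
    by_contra hcon
    push_neg at hcon
    have hfint : Integrable (fun x => 1 - g x ^ 2) μ := (integrable_const 1).sub hint2
    have hfae : 0 ≤ᵐ[μ] fun x => 1 - g x ^ 2 := by
      filter_upwards [hae] with x hx
      have := hcon x hx
      simp only [Pi.zero_apply]
      linarith
    have h1 : ∫ x, (1 - g x ^ 2) ∂μ = 0 := by
      rw [integral_sub (integrable_const 1) hint2]
      simp [hnorm]
    have hsuppf : 0 < μ (Function.support fun x => 1 - g x ^ 2) := by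
      set s := Function.support fun x => 1 - g x ^ 2 with hs
      have hsub : sᶜ ⊆ (Set.Icc lam 1)ᶜ := by
        intro x hx
        simp only [hs, Set.mem_compl_iff, Function.mem_support, not_not] at hx
        intro hxI
        have := hcon x hxI
        nlinarith
      have hnull : μ sᶜ = 0 := measure_mono_null hsub hsupp
      have h2 : (1 : ENNReal) ≤ μ s := by
        calc (1 : ENNReal) = μ Set.univ := (measure_univ).symm
          _ = μ (s ∪ sᶜ) := by rw [Set.union_compl_self]
          _ ≤ μ s + μ sᶜ := measure_union_le _ _
          _ = μ s := by rw [hnull, add_zero]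
      exact lt_of_lt_of_le zero_lt_one h2
    have := (integral_pos_iff_support_of_nonneg_ae hfae hfint).mpr hsuppf
    rw [h1] at this
    exact lt_irrefl 0 this
  obtain ⟨a, haI, ha⟩ := hexa
  obtain ⟨b, hbI, hb⟩ := hexb
  have haabs : |g a| ≤ 1 := by
    rw [← sq_abs] at ha
    nlinarith [abs_nonneg (g a)]
  have hbabs : 1 ≤ |g b| := by
    rw [← sq_abs] at hb
    nlinarith [abs_nonneg (g b)]
  have hr0 : 0 ≤ r := by
    have := hr a haI a haI
    simpa using this
  -- pointwise bound on Icc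
  have hpt : ∀ x ∈ Set.Icc lam 1,
      g x ^ 2 * Real.log (g x ^ 2) ≤ r ^ 2 * (2 * g x ^ 2 + 2) + (g x ^ 2 - 1) := by
    intro x hxI
    have h0 : (0:ℝ) ≤ g x ^ 2 := sq_nonneg _
    have hlog : g x ^ 2 * Real.log (g x ^ 2) ≤ g x ^ 2 * (g x ^ 2 - 1) :=
      mul_log_le _ h0
    -- |(|g x| - 1)| ≤ r
    have habs : |(|g x| - 1)| ≤ r := by
      rcases le_or_gt 1 |g x| with hc | hc
      · rw [abs_of_nonneg (by linarith)]
        have h1 : |g x| - |g a| ≤ |g x - g a| := abs_sub_abs_le_abs_sub _ _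
        have h2 := hr x hxI a haI
        linarith
      · rw [abs_of_nonpos (by linarith)]
        have h1 : |g b| - |g x| ≤ |g b - g x| := abs_sub_abs_le_abs_sub _ _
        have h2 := hr b hbI x hxI
        linarith
    have hsq1 : (|g x| - 1) ^ 2 ≤ r ^ 2 := by
      nlinarith [abs_nonneg (|g x| - 1), sq_abs (|g x| - 1)]
    have hfac : (g x ^ 2 - 1) ^ 2 = (|g x| - 1) ^ 2 * (|g x| + 1) ^ 2 := by
      have : g x ^ 2 = |g x| ^ 2 := (sq_abs _).symm
      nlinarith [sq_abs (g x)]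
    have hplus : (|g x| + 1) ^ 2 ≤ 2 * g x ^ 2 + 2 := by
      nlinarith [sq_abs (g x), sq_nonneg (|g x| - 1)]
    have hstep : (g x ^ 2 - 1) ^ 2 ≤ r ^ 2 * (2 * g x ^ 2 + 2) := by
      rw [hfac]
      have hp0 : (0:ℝ) ≤ (|g x| + 1) ^ 2 := sq_nonneg _
      calc (|g x| - 1) ^ 2 * (|g x| + 1) ^ 2 ≤ r ^ 2 * (|g x| + 1) ^ 2 :=
            mul_le_mul_of_nonneg_right hsq1 hp0
        _ ≤ r ^ 2 * (2 * g x ^ 2 + 2) :=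
            mul_le_mul_of_nonneg_left hplus (sq_nonneg r)
    nlinarith
  -- integrate
  have hinth : Integrable (fun x => r ^ 2 * (2 * g x ^ 2 + 2) + (g x ^ 2 - 1)) μ := by
    exact (((hint2.const_mul 2).add (integrable_const 2)).const_mul (r ^ 2)).add
      (hint2.sub (integrable_const 1))
  have hmono : ∫ x, g x ^ 2 * Real.log (g x ^ 2) ∂μ
      ≤ ∫ x, (r ^ 2 * (2 * g x ^ 2 + 2) + (g x ^ 2 - 1)) ∂μ := by
    refine integral_mono_ae hintL hinth ?_
    filter_upwards [hae] with x hx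
    exact hpt x hx
  have hA : Integrable (fun x => r ^ 2 * (2 * g x ^ 2 + 2)) μ := by
    have h' : Integrable (fun x => 2 * g x ^ 2 + 2) μ :=
      (hint2.const_mul 2).add (integrable_const 2)
    exact h'.const_mul _
  have hB : Integrable (fun x => g x ^ 2 - 1) μ := hint2.sub (integrable_const 1)
  have hC : Integrable (fun x => 2 * g x ^ 2) μ := hint2.const_mul 2
  have hcomp : ∫ x, (r ^ 2 * (2 * g x ^ 2 + 2) + (g x ^ 2 - 1)) ∂μ = 4 * r ^ 2 := by
    rw [integral_add hA hB, integral_const_mul, integral_add hC (integrable_const 2),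
      integral_const_mul, integral_sub hint2 (integrable_const 1), hnorm]
    simp
    ring
  linarith [hmono, hcomp.le, hcomp.ge]

/-- Single-site logarithmic Sobolev inequality with oscillation, with constant ρ = 1/8,
i.e. 1/(2ρ) = 4, for an arbitrary probability measure on [λ,1]. -/
theorem single_site_LSI (lam : ℝ) (hlam : 0 < lam) (hlam1 : lam ≤ 1)
    (μ : Measure ℝ) [IsProbabilityMeasure μ] (hsupp : μ (Set.Icc lam 1)ᶜ = 0)
    (ζ : ℝ → ℝ) (hmeas : Measurable ζ) (hbdd : ∃ M, ∀ x, |ζ x| ≤ M) :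
    ∫ x, ζ x ^ 2 * Real.log (ζ x ^ 2 / ∫ y, ζ y ^ 2 ∂μ) ∂μ
      ≤ 4 * (sSup (ζ '' Set.Icc lam 1) - sInf (ζ '' Set.Icc lam 1)) ^ 2 := by
  obtain ⟨M, hM⟩ := hbdd
  set I := ∫ y, ζ y ^ 2 ∂μ with hI
  have hI0 : 0 ≤ I := integral_nonneg fun x => sq_nonneg _
  set osc := sSup (ζ '' Set.Icc lam 1) - sInf (ζ '' Set.Icc lam 1) with hosc
  rcases eq_or_lt_of_le hI0 with hIz | hIpos
  · -- degenerate case I = 0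
    have : ∀ x, ζ x ^ 2 * Real.log (ζ x ^ 2 / I) = ζ x ^ 2 * Real.log (ζ x ^ 2 / I) := fun _ => rfl
    calc ∫ x, ζ x ^ 2 * Real.log (ζ x ^ 2 / I) ∂μ
        = ∫ x, (0:ℝ) ∂μ := by
          congr 1
          funext x
          rw [← hIz, div_zero, Real.log_zero, mul_zero]
      _ = 0 := integral_zero _ _
      _ ≤ 4 * osc ^ 2 := by positivity
  · -- main case I > 0
    have hne : Set.Nonempty (ζ '' Set.Icc lam 1) :=
      ⟨ζ lam, ⟨lam, ⟨le_refl _, hlam1⟩, rfl⟩⟩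
    have hba : BddAbove (ζ '' Set.Icc lam 1) := by
      refine ⟨M, ?_⟩
      rintro v ⟨x, _, rfl⟩
      exact (le_abs_self _).trans (hM x)
    have hbb : BddBelow (ζ '' Set.Icc lam 1) := by
      refine ⟨-M, ?_⟩
      rintro v ⟨x, _, rfl⟩
      exact (neg_le_neg (hM x)).trans (neg_abs_le _)
    have hosc2 : ∀ x ∈ Set.Icc lam 1, ∀ y ∈ Set.Icc lam 1, |ζ x - ζ y| ≤ osc := by
      intro x hx y hy
      have h1 : ζ x ≤ sSup (ζ '' Set.Icc lam 1) := le_csSup hba ⟨x, hx, rfl⟩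
      have h2 : sInf (ζ '' Set.Icc lam 1) ≤ ζ y := csInf_le hbb ⟨y, hy, rfl⟩
      have h3 : ζ y ≤ sSup (ζ '' Set.Icc lam 1) := le_csSup hba ⟨y, hy, rfl⟩
      have h4 : sInf (ζ '' Set.Icc lam 1) ≤ ζ x := csInf_le hbb ⟨x, hx, rfl⟩
      rw [abs_le]
      constructor <;> [skip; skip] <;> simp only [hosc] <;> linarith
    have hsI : 0 < Real.sqrt I := Real.sqrt_pos.mpr hIpos
    have hsI2 : Real.sqrt I ^ 2 = I := Real.sq_sqrt hI0
    set g : ℝ → ℝ := fun x => ζ x / Real.sqrt I with hg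
    have hg2 : ∀ x, g x ^ 2 = ζ x ^ 2 / I := by
      intro x
      rw [hg]
      simp only
      rw [div_pow, hsI2]
    have hgmeas : Measurable g := hmeas.div_const _
    have hgM : ∀ x, |g x| ≤ M / Real.sqrt I := by
      intro x
      rw [hg]
      simp only
      rw [abs_div, abs_of_pos hsI]
      exact div_le_div_of_nonneg_right (hM x) hsI.le
    have hgnorm : ∫ x, g x ^ 2 ∂μ = 1 := by
      have : (fun x => g x ^ 2) = fun x => ζ x ^ 2 / I := funext hg2
      rw [this, integral_div, ← hI, div_self hIpos.ne']
    set r := osc / Real.sqrt I with hrdef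
    have hgr : ∀ x ∈ Set.Icc lam 1, ∀ y ∈ Set.Icc lam 1, |g x - g y| ≤ r := by
      intro x hx y hy
      rw [hg]
      simp only
      rw [div_sub_div_same, abs_div, abs_of_pos hsI, hrdef]
      exact div_le_div_of_nonneg_right (hosc2 x hx y hy) hsI.le
    have key := aux_LSI lam hlam1 μ hsupp g hgmeas _ hgM hgnorm r hgr
    have hconv : ∫ x, ζ x ^ 2 * Real.log (ζ x ^ 2 / I) ∂μ
        = I * ∫ x, g x ^ 2 * Real.log (g x ^ 2) ∂μ := by
      rw [← integral_const_mul]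
      congr 1
      funext x
      rw [hg2 x]
      field_simp
    rw [hconv]
    have hmul : I * ∫ x, g x ^ 2 * Real.log (g x ^ 2) ∂μ ≤ I * (4 * r ^ 2) :=
      mul_le_mul_of_nonneg_left key hI0
    have hr2 : I * (4 * r ^ 2) = 4 * osc ^ 2 := by
      rw [hrdef, div_pow, hsI2]
      field_simp
    linarith
end

section
/- Let ⟨·⟩ be a product probability measure on a countable product of intervals and let f > 0 be a cylinder random variable. Writing ⟨·⟩_{<n} for averaging over the first n−1 coordinates, one has for each n: osc_n √(⟨f⟩_{<n}) ≤ (⟨(osc_n √f)²⟩_{<n})^{1/2}, where osc_n denotes oscillation in the n-th coordinate. -/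
open MeasureTheory Real

/-- The oscillation of a random variable `ζ` on the product space in the `n`-th
coordinate, the other coordinates being fixed at the values of `a`; the `n`-th
coordinate ranges over `[lam,1]`. -/
noncomputable def oscAt (lam : ℝ) (ζ : (ℕ → ℝ) → ℝ) (n : ℕ) (a : ℕ → ℝ) : ℝ :=
  sSup {z | ∃ t : ℕ → ℝ, (∀ m, t m ∈ Set.Icc lam 1) ∧ (∀ m, m ≠ n → t m = a m) ∧ z = ζ t}
    - sInf {z | ∃ t : ℕ → ℝ, (∀ m, t m ∈ Set.Icc lam 1) ∧ (∀ m, m ≠ n → t m = a m) ∧ z = ζ t}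

/-- Average over the first `n` coordinates (coordinates `0, …, n-1`) with respect to the
single-site measures `μs`, the remaining coordinates being fixed at the values of `a`. -/
noncomputable def avgBelow (μs : ℕ → Measure ℝ) (n : ℕ) (f : (ℕ → ℝ) → ℝ)
    (a : ℕ → ℝ) : ℝ :=
  ∫ b : Fin n → ℝ, f (fun k => if h : k < n then b ⟨k, h⟩ else a k)
    ∂(Measure.pi fun i : Fin n => μs i)

section OscAuxHidden
open Set Filter Topology
open scoped ENNReal NNReal

namespace OscAux


variable {X : Type*} [MetricSpace X] [MeasurableSpace X] [BorelSpace X]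

def Sset (p : ℕ → ℕ) (k : ℕ) : Set (ℕ → ℕ) := {σ | ∀ i < k, σ i ≤ p i}

lemma Sset_zero (p : ℕ → ℕ) : Sset p 0 = univ := by
  ext σ; simp [Sset]

lemma Sset_succ (p : ℕ → ℕ) (k : ℕ) :
    Sset p (k + 1) = Sset p k ∩ {σ | σ k ≤ p k} := by
  ext σ
  constructor
  · intro h
    exact ⟨fun i hi => h i (Nat.lt_succ_of_lt hi), h k (Nat.lt_succ_self k)⟩
  · rintro ⟨h1, h2⟩ i hi
    rcases Nat.lt_succ_iff_lt_or_eq.mp hi with h | rfl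
    · exact h1 i h
    · exact h2

lemma Sset_congr {p q : ℕ → ℕ} {k : ℕ} (h : ∀ i < k, p i = q i) :
    Sset p k = Sset q k := by
  ext σ
  exact forall₂_congr fun i hi => by rw [h i hi]

lemma Sset_anti (p : ℕ → ℕ) : Antitone (Sset p) :=
  fun k l hkl σ hσ i hi => hσ i (lt_of_lt_of_le hi hkl)

lemma exists_step (μ : Measure X) [IsFiniteMeasure μ] {φ : (ℕ → ℕ) → X}
    (p : ℕ → ℕ) (k : ℕ) {δ : ℝ≥0∞} (hδ : δ ≠ 0) :
    ∃ m, μ (φ '' Sset p k) ≤ μ (φ '' (Sset p k ∩ {σ | σ k ≤ m})) + δ := by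
  set A : ℕ → Set X := fun m => φ '' (Sset p k ∩ {σ | σ k ≤ m}) with hA
  have hmono : Monotone A := fun m m' h =>
    image_mono (inter_subset_inter_right _ fun σ hσ => le_trans hσ h)
  have hun0 : (⋃ m, (Sset p k ∩ {σ | σ k ≤ m})) = Sset p k := by
    ext σ
    simp only [mem_iUnion, mem_inter_iff, mem_setOf_eq]
    constructor
    · rintro ⟨m, h, _⟩; exact h
    · intro h; exact ⟨σ k, h, le_rfl⟩
  have hun : ⋃ m, A m = φ '' Sset p k := by
    rw [hA, ← image_iUnion, hun0]
  have hsup := hmono.measure_iUnion (μ := μ)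
  rw [hun] at hsup
  by_cases h0 : μ (φ '' Sset p k) = 0
  · exact ⟨0, by simp [h0]⟩
  · have hlt : μ (φ '' Sset p k) - δ < ⨆ m, μ (A m) := by
      rw [← hsup]
      exact ENNReal.sub_lt_self (measure_ne_top μ _) h0 hδ
    rcases lt_iSup_iff.mp hlt with ⟨m, hm⟩
    exact ⟨m, tsub_le_iff_right.mp hm.le⟩

lemma exists_closed_subset (μ : Measure X) [IsFiniteMeasure μ] {φ : (ℕ → ℕ) → X}
    (hφ : Continuous φ) {ε : ℝ≥0∞} (hε : ε ≠ 0) :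
    ∃ F : Set X, IsClosed F ∧ F ⊆ range φ ∧ μ (range φ) ≤ μ F + ε := by
  obtain ⟨δ, hδpos, hδsum⟩ := ENNReal.exists_pos_sum_of_countable hε ℕ
  have step : ∀ (p : ℕ → ℕ) (k : ℕ),
      ∃ m, μ (φ '' Sset p k) ≤ μ (φ '' (Sset p k ∩ {σ | σ k ≤ m})) + δ k := by
    intro p k
    exact exists_step μ p k (by exact_mod_cast (hδpos k).ne')
  choose pick hpick using step
  let g : ℕ → (ℕ → ℕ) := fun k =>
    Nat.rec (fun _ => 0) (fun k pk => Function.update pk k (pick pk k)) k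
  have hg_succ : ∀ k, g (k + 1) = Function.update (g k) k (pick (g k) k) := fun k => rfl
  set τ : ℕ → ℕ := fun i => g (i + 1) i with hτ
  have hagree : ∀ k i, i < k → g k i = τ i := by
    intro k
    induction k with
    | zero => exact fun i hi => absurd hi (Nat.not_lt_zero i)
    | succ k ih =>
      intro i hi
      rcases Nat.lt_succ_iff_lt_or_eq.mp hi with h | rfl
      · rw [hg_succ, Function.update_of_ne (by omega : i ≠ k)]
        exact ih i h
      · rfl
  have hSeq : ∀ k, Sset τ k = Sset (g k) k :=
    fun k => Sset_congr fun i hi => (hagree k i hi).symm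
  have hτk : ∀ k, τ k = pick (g k) k := by
    intro k
    show g (k + 1) k = _
    rw [hg_succ, Function.update_self]
  have hSsucc' : ∀ k, Sset τ (k + 1) = Sset (g k) k ∩ {σ | σ k ≤ pick (g k) k} := by
    intro k
    rw [Sset_succ, hSeq k, hτk k]
  have key : ∀ k, μ (φ '' Sset τ k) ≤ μ (φ '' Sset τ (k + 1)) + δ k := by
    intro k
    rw [hSeq k, hSsucc' k]
    exact hpick (g k) k
  have inv : ∀ k, μ (range φ) ≤ μ (φ '' Sset τ k) + ∑ j ∈ Finset.range k, (δ j : ℝ≥0∞) := by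
    intro k
    induction k with
    | zero => simp [Sset_zero, image_univ]
    | succ k ih =>
      calc μ (range φ) ≤ μ (φ '' Sset τ k) + ∑ j ∈ Finset.range k, (δ j : ℝ≥0∞) := ih
        _ ≤ (μ (φ '' Sset τ (k + 1)) + δ k) + ∑ j ∈ Finset.range k, (δ j : ℝ≥0∞) :=
            add_le_add_left (key k) _
        _ = μ (φ '' Sset τ (k + 1)) + ∑ j ∈ Finset.range (k + 1), (δ j : ℝ≥0∞) := by
            rw [Finset.sum_range_succ]; ring
  refine ⟨⋂ k, closure (φ '' Sset τ k), isClosed_iInter fun _ => isClosed_closure, ?_, ?_⟩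
  · -- the subsequence argument
    intro x hx
    have hx' : ∀ k : ℕ, ∃ σ, σ ∈ Sset τ k ∧ dist x (φ σ) < 1 / (k + 1) := by
      intro k
      have hxk : x ∈ closure (φ '' Sset τ k) := mem_iInter.mp hx k
      rcases Metric.mem_closure_iff.mp hxk (1 / (k + 1)) (by positivity) with ⟨y, hy, hd⟩
      rcases hy with ⟨σ, hσ, rfl⟩
      exact ⟨σ, hσ, hd⟩
    choose σ hσ hdist using hx'
    set ρ : ℕ → (ℕ → ℕ) := fun k i => min (σ k i) (τ i) with hρ
    have hK : IsCompact (Set.pi univ fun i : ℕ => Iic (τ i)) :=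
      isCompact_univ_pi fun i => (Set.finite_Iic (τ i)).isCompact
    have hρK : ∀ k, ρ k ∈ Set.pi univ fun i : ℕ => Iic (τ i) :=
      fun k i _ => mem_Iic.mpr (min_le_right _ _)
    obtain ⟨σs, _, ψ, hψ, hconv⟩ := hK.tendsto_subseq hρK
    have hconv' : Tendsto (fun j => σ (ψ j)) atTop (𝓝 σs) := by
      rw [tendsto_pi_nhds]
      intro i
      have h1 : Tendsto (fun j => ρ (ψ j) i) atTop (𝓝 (σs i)) := by
        have := tendsto_pi_nhds.mp hconv i
        exact this
      rw [nhds_discrete] at h1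
      have h2 : ∀ᶠ j in atTop, ρ (ψ j) i = σs i := tendsto_pure.mp h1
      have h3 : ∀ᶠ j in atTop, i < ψ j :=
        eventually_atTop.mpr ⟨i + 1, fun j hj => lt_of_lt_of_le (Nat.lt_succ_self i)
          (le_trans hj (hψ.le_apply))⟩
      have h4 : ∀ᶠ j in atTop, σ (ψ j) i = σs i := by
        filter_upwards [h2, h3] with j e1 e2
        have hle : σ (ψ j) i ≤ τ i := hσ (ψ j) i e2
        rw [← e1, hρ]
        simp [min_eq_left hle]
      rw [nhds_discrete]
      exact tendsto_pure.mpr h4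
    have hφconv : Tendsto (fun j => φ (σ (ψ j))) atTop (𝓝 (φ σs)) :=
      (hφ.tendsto σs).comp hconv'
    have hx2 : Tendsto (fun j => φ (σ (ψ j))) atTop (𝓝 x) := by
      rw [tendsto_iff_dist_tendsto_zero]
      have hb : ∀ j : ℕ, dist (φ (σ (ψ j))) x ≤ 1 / ((j : ℝ) + 1) := by
        intro j
        rw [dist_comm]
        refine le_trans (hdist (ψ j)).le (one_div_le_one_div_of_le (by positivity) ?_)
        have hj : (j : ℝ) ≤ (ψ j : ℝ) := Nat.cast_le.mpr hψ.le_apply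
        linarith
      exact squeeze_zero (fun j => dist_nonneg) hb tendsto_one_div_add_atTop_nhds_zero_nat
    exact ⟨σs, tendsto_nhds_unique hφconv hx2⟩
  · -- measure bound
    have hanti : Antitone fun k => closure (φ '' Sset τ k) :=
      fun k l h => closure_mono (image_mono (Sset_anti τ h))
    have hiInter : μ (⋂ k, closure (φ '' Sset τ k)) = ⨅ k, μ (closure (φ '' Sset τ k)) := by
      refine Directed.measure_iInter
        (fun k => isClosed_closure.measurableSet.nullMeasurableSet)
        (hanti.directed_ge) ⟨0, measure_ne_top μ _⟩
    have hbound : ∀ k, μ (range φ) ≤ μ (closure (φ '' Sset τ k)) + ε := by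
      intro k
      refine le_trans (inv k) (add_le_add (measure_mono subset_closure) ?_)
      exact le_trans (ENNReal.sum_le_tsum _) hδsum.le
    rw [hiInter]
    rw [← tsub_le_iff_right]
    refine le_iInf fun k => ?_
    rw [tsub_le_iff_right]
    exact hbound k

theorem analyticSet_nullMeasurableSet {s : Set X} (hs : MeasureTheory.AnalyticSet s)
    (μ : Measure X) [IsFiniteMeasure μ] : NullMeasurableSet s μ := by
  rw [MeasureTheory.AnalyticSet] at hs
  rcases hs with rfl | ⟨φ, hφ, rfl⟩
  · exact MeasurableSet.empty.nullMeasurableSet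
  · have key := fun m : ℕ =>
      exists_closed_subset μ hφ (ε := ((m : ℝ≥0∞) + 1)⁻¹)
        (by simp)
    choose F hFc hFsub hFμ using key
    have hSm : MeasurableSet (⋃ m, F m) := MeasurableSet.iUnion fun m => (hFc m).measurableSet
    have hSsub : (⋃ m, F m) ⊆ range φ := iUnion_subset hFsub
    have hμ : μ (range φ) ≤ μ (⋃ m, F m) := by
      refine ENNReal.le_of_forall_pos_le_add fun ε hε _ => ?_
      obtain ⟨m, hm⟩ := ENNReal.exists_inv_nat_lt (show (ε : ℝ≥0∞) ≠ 0 by exact_mod_cast hε.ne')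
      refine le_trans (hFμ m) (add_le_add (measure_mono (subset_iUnion F m)) ?_)
      refine le_trans ?_ hm.le
      exact ENNReal.inv_le_inv.mpr (by simp)
    have hdiff : μ (range φ \ ⋃ m, F m) = 0 := by
      have h1 : range φ \ (⋃ m, F m) ⊆ toMeasurable μ (range φ) \ (⋃ m, F m) :=
        diff_subset_diff_left (subset_toMeasurable μ _)
      refine measure_mono_null h1 ?_
      rw [measure_diff (hSsub.trans (subset_toMeasurable _ _)) hSm.nullMeasurableSet
        (measure_ne_top μ _), measure_toMeasurable]
      exact tsub_eq_zero_of_le hμ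
    have hrw : range φ = (⋃ m, F m) ∪ (range φ \ ⋃ m, F m) := (union_diff_cancel hSsub).symm
    rw [hrw]
    exact hSm.nullMeasurableSet.union (NullMeasurableSet.of_null hdiff)



lemma sqrt_integral_triangle {α : Type*} [MeasurableSpace α] (μ : Measure α)
    [IsFiniteMeasure μ] {g h : α → ℝ} (hgm : Measurable g) (hhm : Measurable h)
    (hg0 : ∀ x, 0 ≤ g x) (hh0 : ∀ x, 0 ≤ h x) {C : ℝ}
    (hgC : ∀ x, g x ≤ C) (hhC : ∀ x, h x ≤ C) :
    Real.sqrt (∫ x, g x ^ 2 ∂μ) ≤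
      Real.sqrt (∫ x, h x ^ 2 ∂μ) + Real.sqrt (∫ x, (g x - h x) ^ 2 ∂μ) := by
  -- basic integrability
  have habs : ∀ x, |g x - h x| ≤ C := by
    intro x
    rw [abs_sub_le_iff]
    constructor
    · have := hh0 x; have := hgC x; linarith
    · have := hg0 x; have := hhC x; linarith
  -- replace `C` by `max C 0` so that it is nonnegative
  set C1 := max C 0 with hC1
  have hgC1 : ∀ x, g x ≤ C1 := fun x => (hgC x).trans (le_max_left _ _)
  have hhC1 : ∀ x, h x ≤ C1 := fun x => (hhC x).trans (le_max_left _ _)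
  have habs1 : ∀ x, |g x - h x| ≤ C1 := fun x => (habs x).trans (le_max_left _ _)
  have hC0 : 0 ≤ C1 := le_max_right _ _
  have int_g2 : Integrable (fun x => g x ^ 2) μ := by
    refine (integrable_const (C1 ^ 2)).mono' ((hgm.pow_const 2).aestronglyMeasurable) ?_
    refine ae_of_all _ fun x => ?_
    rw [Real.norm_eq_abs, abs_of_nonneg (sq_nonneg _)]
    exact pow_le_pow_left₀ (hg0 x) (hgC1 x) 2
  have int_h2 : Integrable (fun x => h x ^ 2) μ := by
    refine (integrable_const (C1 ^ 2)).mono' ((hhm.pow_const 2).aestronglyMeasurable) ?_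
    refine ae_of_all _ fun x => ?_
    rw [Real.norm_eq_abs, abs_of_nonneg (sq_nonneg _)]
    exact pow_le_pow_left₀ (hh0 x) (hhC1 x) 2
  have int_d2 : Integrable (fun x => (g x - h x) ^ 2) μ := by
    refine (integrable_const (C1 ^ 2)).mono' (((hgm.sub hhm).pow_const 2).aestronglyMeasurable) ?_
    refine ae_of_all _ fun x => ?_
    rw [Real.norm_eq_abs, abs_of_nonneg (sq_nonneg _)]
    calc (g x - h x) ^ 2 = |g x - h x| ^ 2 := (sq_abs _).symm
      _ ≤ C1 ^ 2 := pow_le_pow_left₀ (abs_nonneg _) (habs1 x) 2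
  have int_hd : Integrable (fun x => h x * |g x - h x|) μ := by
    refine (integrable_const (C1 * C1)).mono'
      ((hhm.mul (hgm.sub hhm).abs).aestronglyMeasurable) ?_
    refine ae_of_all _ fun x => ?_
    rw [Real.norm_eq_abs, abs_of_nonneg (mul_nonneg (hh0 x) (abs_nonneg _))]
    exact mul_le_mul (hhC1 x) (habs1 x) (abs_nonneg _) hC0
  have int_hd' : Integrable (fun x => h x * (g x - h x)) μ := by
    refine (integrable_const (C1 * C1)).mono'
      ((hhm.mul (hgm.sub hhm)).aestronglyMeasurable) ?_
    refine ae_of_all _ fun x => ?_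
    rw [Real.norm_eq_abs, abs_mul, abs_of_nonneg (hh0 x)]
    exact mul_le_mul (hhC1 x) (habs1 x) (abs_nonneg _) hC0
  set H := Real.sqrt (∫ x, h x ^ 2 ∂μ) with hH
  set D := Real.sqrt (∫ x, (g x - h x) ^ 2 ∂μ) with hD
  have hH2 : ∫ x, h x ^ 2 ∂μ = H ^ 2 :=
    (Real.sq_sqrt (integral_nonneg fun x => sq_nonneg _)).symm
  have hD2 : ∫ x, (g x - h x) ^ 2 ∂μ = D ^ 2 :=
    (Real.sq_sqrt (integral_nonneg fun x => sq_nonneg _)).symm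
  have hH0 : 0 ≤ H := Real.sqrt_nonneg _
  have hD0 : 0 ≤ D := Real.sqrt_nonneg _
  -- Cauchy-Schwarz : ∫ h|g-h| ≤ H * D
  have hCS : (∫ x, h x * |g x - h x| ∂μ) ≤ H * D := by
    have hP0 : 0 ≤ ∫ x, h x * |g x - h x| ∂μ :=
      integral_nonneg fun x => mul_nonneg (hh0 x) (abs_nonneg _)
    have key : ∀ lam : ℝ, 0 < lam →
        (∫ x, h x * |g x - h x| ∂μ) ≤
          (lam * (∫ x, h x ^ 2 ∂μ) + (∫ x, (g x - h x) ^ 2 ∂μ) / lam) / 2 := by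
      intro lam hlam
      have hpt : ∀ x, h x * |g x - h x| ≤ (lam * h x ^ 2 + (g x - h x) ^ 2 / lam) / 2 := by
        intro x
        have h1 := sq_nonneg (lam * h x - |g x - h x|)
        have h2 : |g x - h x| ^ 2 = (g x - h x) ^ 2 := sq_abs _
        have key2 : 2 * lam * (h x * |g x - h x|) ≤ lam ^ 2 * h x ^ 2 + (g x - h x) ^ 2 := by
          nlinarith [h1, h2]
        have heq : (lam * h x ^ 2 + (g x - h x) ^ 2 / lam) / 2 - h x * |g x - h x| =
            (lam ^ 2 * h x ^ 2 + (g x - h x) ^ 2 - 2 * lam * (h x * |g x - h x|)) /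
              (2 * lam) := by
          field_simp
        rw [← sub_nonneg, heq]
        exact div_nonneg (by linarith) (by positivity)
      calc (∫ x, h x * |g x - h x| ∂μ)
          ≤ ∫ x, (lam * h x ^ 2 + (g x - h x) ^ 2 / lam) / 2 ∂μ := by
            refine integral_mono int_hd ?_ hpt
            exact ((int_h2.const_mul lam).add (int_d2.div_const lam)).div_const 2
        _ = (lam * (∫ x, h x ^ 2 ∂μ) + (∫ x, (g x - h x) ^ 2 ∂μ) / lam) / 2 := by
            rw [integral_div, integral_add (int_h2.const_mul lam) (int_d2.div_const lam),
              integral_const_mul, integral_div]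
    by_cases hDz : (∫ x, (g x - h x) ^ 2 ∂μ) = 0
    · have hae : (fun x => (g x - h x) ^ 2) =ᵐ[μ] 0 :=
        (integral_eq_zero_iff_of_nonneg (fun x => sq_nonneg _) int_d2).mp hDz
      have : (fun x => h x * |g x - h x|) =ᵐ[μ] 0 := by
        filter_upwards [hae] with x hx
        have : (g x - h x) ^ 2 = 0 := hx
        have hx0 : g x - h x = 0 := by nlinarith [sq_nonneg (g x - h x)]
        simp [hx0]
      rw [integral_congr_ae this]
      simpa using mul_nonneg hH0 hD0
    · have hDpos : 0 < ∫ x, (g x - h x) ^ 2 ∂μ :=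
        lt_of_le_of_ne (integral_nonneg fun x => sq_nonneg _) (Ne.symm hDz)
      by_cases hHz : (∫ x, h x ^ 2 ∂μ) = 0
      · have hae : (fun x => h x ^ 2) =ᵐ[μ] 0 :=
          (integral_eq_zero_iff_of_nonneg (fun x => sq_nonneg _) int_h2).mp hHz
        have : (fun x => h x * |g x - h x|) =ᵐ[μ] 0 := by
          filter_upwards [hae] with x hx
          have : h x ^ 2 = 0 := hx
          have hx0 : h x = 0 := by nlinarith [sq_nonneg (h x)]
          simp [hx0]
        rw [integral_congr_ae this]
        simpa using mul_nonneg hH0 hD0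
      · have hHpos : 0 < ∫ x, h x ^ 2 ∂μ :=
          lt_of_le_of_ne (integral_nonneg fun x => sq_nonneg _) (Ne.symm hHz)
        have hHp : 0 < H := Real.sqrt_pos.mpr hHpos
        have hDp : 0 < D := Real.sqrt_pos.mpr hDpos
        have hlam : 0 < D / H := div_pos hDp hHp
        have := key (D / H) hlam
        rw [hH2, hD2] at this
        calc (∫ x, h x * |g x - h x| ∂μ)
            ≤ (D / H * H ^ 2 + D ^ 2 / (D / H)) / 2 := this
          _ = H * D := by field_simp; ring
  -- expansion
  have hexp : (∫ x, g x ^ 2 ∂μ) =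
      (∫ x, h x ^ 2 ∂μ) + 2 * (∫ x, h x * (g x - h x) ∂μ) + (∫ x, (g x - h x) ^ 2 ∂μ) := by
    have hptw : (fun x => g x ^ 2) =
        fun x => h x ^ 2 + 2 * (h x * (g x - h x)) + (g x - h x) ^ 2 :=
      funext fun x => by ring
    have intA : Integrable (fun x => h x ^ 2 + 2 * (h x * (g x - h x))) μ :=
      int_h2.add (int_hd'.const_mul 2)
    rw [hptw, integral_add intA int_d2, integral_add int_h2 (int_hd'.const_mul 2),
      integral_const_mul]
  have hmid : (∫ x, h x * (g x - h x) ∂μ) ≤ H * D := by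
    refine le_trans (integral_mono int_hd' int_hd fun x => ?_) hCS
    exact mul_le_mul_of_nonneg_left (le_abs_self _) (hh0 x)
  have hfin : (∫ x, g x ^ 2 ∂μ) ≤ (H + D) ^ 2 := by
    rw [hexp, hH2, hD2]
    nlinarith [hmid]
  calc Real.sqrt (∫ x, g x ^ 2 ∂μ) ≤ Real.sqrt ((H + D) ^ 2) := Real.sqrt_le_sqrt hfin
    _ = H + D := Real.sqrt_sq (add_nonneg hH0 hD0)


lemma nullMeasurableSet_proj {n : ℕ} (μ : Measure (Fin n → ℝ)) [IsFiniteMeasure μ]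
    {E : Set ((Fin n → ℝ) × ℝ)} (hE : MeasurableSet E) :
    NullMeasurableSet {b | ∃ x, (b, x) ∈ E} μ := by
  have h1 : {b | ∃ x, (b, x) ∈ E} = Prod.fst '' E := by
    ext b
    constructor
    · rintro ⟨x, hx⟩; exact ⟨(b, x), hx, rfl⟩
    · rintro ⟨⟨b', x⟩, hx, rfl⟩; exact ⟨x, hx⟩
  rw [h1]
  exact analyticSet_nullMeasurableSet (hE.analyticSet_image measurable_fst) μ

end OscAux

end OscAuxHidden

open OscAux

/-- The oscillation of the square root of a conditional average is bounded by the
L²-average of the oscillation of the square root. -/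
theorem osc_sqrt_condexp (lam : ℝ) (hlam : 0 < lam) (hlam1 : lam ≤ 1)
    (μs : ℕ → Measure ℝ) (hprob : ∀ n, IsProbabilityMeasure (μs n))
    (hsuppn : ∀ n, μs n (Set.Icc lam 1)ᶜ = 0)
    (f : (ℕ → ℝ) → ℝ) (hmeas : Measurable f) (hpos : ∀ a, 0 < f a)
    (hbdd : ∃ M, ∀ a, |f a| ≤ M)
    (hcyl : ∃ N : ℕ, ∀ a a' : ℕ → ℝ, (∀ n < N, a n = a' n) → f a = f a') :
    ∀ (n : ℕ) (a : ℕ → ℝ),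
      oscAt lam (fun a' => Real.sqrt (avgBelow μs n f a')) n a
        ≤ Real.sqrt (avgBelow μs n
            (fun a' => (oscAt lam (fun a'' => Real.sqrt (f a'')) n a') ^ 2) a) := by
  classical
  obtain ⟨M0, hM0⟩ := hbdd
  set M := max M0 0 with hMdef
  have hMnn : 0 ≤ M := le_max_right _ _
  have hfM : ∀ x, f x ≤ M := fun x => le_trans (le_of_abs_le (hM0 x)) (le_max_left _ _)
  have hf0 : ∀ x, 0 ≤ f x := fun x => (hpos x).le
  intro n a
  by_cases hA : ∀ m, m ≠ n → a m ∈ Set.Icc lam 1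
  swap
  · -- degenerate case : the admissible set is empty
    push_neg at hA
    obtain ⟨m0, hm0ne, hm0⟩ := hA
    have hempty : {z | ∃ t : ℕ → ℝ, (∀ m, t m ∈ Set.Icc lam 1) ∧ (∀ m, m ≠ n → t m = a m) ∧
        z = Real.sqrt (avgBelow μs n f t)} = ∅ := by
      ext z
      simp only [Set.mem_setOf_eq, Set.mem_empty_iff_false, iff_false, not_exists]
      rintro t ⟨h1, h2, _⟩
      exact hm0 (h2 m0 hm0ne ▸ h1 m0)
    show sSup {z | ∃ t : ℕ → ℝ, (∀ m, t m ∈ Set.Icc lam 1) ∧ (∀ m, m ≠ n → t m = a m) ∧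
        z = Real.sqrt (avgBelow μs n f t)}
      - sInf {z | ∃ t : ℕ → ℝ, (∀ m, t m ∈ Set.Icc lam 1) ∧ (∀ m, m ≠ n → t m = a m) ∧
        z = Real.sqrt (avgBelow μs n f t)} ≤ _
    rw [hempty, Real.sSup_empty, Real.sInf_empty, sub_zero]
    exact Real.sqrt_nonneg _
  -- main case
  haveI : ∀ i : Fin n, IsProbabilityMeasure (μs (i : ℕ)) := fun i => hprob i
  set Pn : Measure (Fin n → ℝ) := Measure.pi (fun i : Fin n => μs i) with hPn
  haveI hPnprob : IsProbabilityMeasure Pn := by rw [hPn]; infer_instance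
  set ins : (Fin n → ℝ) → (ℕ → ℝ) → ℕ → ℝ :=
    fun b t k => if h : k < n then b ⟨k, h⟩ else t k with hins
  have hins_meas : ∀ t : ℕ → ℝ, Measurable fun b => ins b t := by
    intro t
    refine measurable_pi_lambda _ fun k => ?_
    by_cases h : k < n
    · simp only [hins, dif_pos h]
      exact measurable_pi_apply _
    · simp only [hins, dif_neg h]
      exact measurable_const
  have havg : ∀ g : (ℕ → ℝ) → ℝ, ∀ t, avgBelow μs n g t = ∫ b, g (ins b t) ∂Pn :=
    fun g t => rfl
  -- the box
  set box : Set (Fin n → ℝ) := ⋂ i : Fin n, (fun b => b i) ⁻¹' (Set.Icc lam 1) with hbox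
  have hbox_mem : ∀ b : Fin n → ℝ, b ∈ box ↔ ∀ i, b i ∈ Set.Icc lam 1 := fun b => Set.mem_iInter
  have hbox_meas : MeasurableSet box :=
    MeasurableSet.iInter fun i => (measurable_pi_apply i) measurableSet_Icc
  have hbox_ae : ∀ᵐ b ∂Pn, b ∈ box := by
    have h1 : box = Set.pi Set.univ (fun _ : Fin n => Set.Icc lam 1) := by
      ext b
      rw [hbox_mem b, Set.mem_univ_pi]
    have h2 : Pn box = 1 := by
      rw [h1, hPn, Measure.pi_pi]
      have : ∀ i : Fin n, μs (i : ℕ) (Set.Icc lam 1) = 1 := fun i =>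
        prob_compl_eq_zero_iff measurableSet_Icc |>.mp (hsuppn i)
      simp [this]
    have h3 : Pn boxᶜ = 0 := by
      rw [measure_compl hbox_meas (measure_ne_top Pn box), h2, measure_univ, tsub_self]
    rw [ae_iff]
    simpa [Set.compl_def] using h3
  -- the oscillation sets for √f
  set E : (Fin n → ℝ) → Set ℝ := fun b =>
    {z | ∃ t : ℕ → ℝ, (∀ m, t m ∈ Set.Icc lam 1) ∧ (∀ m, m ≠ n → t m = ins b a m) ∧
      z = Real.sqrt (f t)} with hE
  set u : (Fin n → ℝ) → ℝ := fun b => sSup (E b) with hudef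
  set v : (Fin n → ℝ) → ℝ := fun b => sInf (E b) with hvdef
  have hosc : ∀ b, oscAt lam (fun a'' => Real.sqrt (f a'')) n (ins b a) = u b - v b :=
    fun b => rfl
  have helem : ∀ b z, z ∈ E b → 0 ≤ z ∧ z ≤ Real.sqrt M := by
    rintro b z ⟨t, -, -, rfl⟩
    exact ⟨Real.sqrt_nonneg _, Real.sqrt_le_sqrt (hfM t)⟩
  have hbddA : ∀ b, BddAbove (E b) := fun b => ⟨Real.sqrt M, fun z hz => (helem b z hz).2⟩
  have hbddB : ∀ b, BddBelow (E b) := fun b => ⟨0, fun z hz => (helem b z hz).1⟩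
  have hE_empty : ∀ b, b ∉ box → E b = ∅ := by
    intro b hb
    rw [Set.eq_empty_iff_forall_notMem]
    rintro z ⟨t, h1, h2, -⟩
    refine hb ((hbox_mem b).mpr fun i => ?_)
    have hi : (i : ℕ) < n := i.2
    have := h1 (i : ℕ)
    have ht : t (i : ℕ) = b i := by
      by_cases hne : (i : ℕ) = n
      · omega
      · rw [h2 _ hne]
        simp [hins, hi]
    rwa [ht] at this
  have hE_box : ∀ b, b ∈ box →
      E b = (fun x => Real.sqrt (f (Function.update (ins b a) n x))) '' Set.Icc lam 1 := by
    intro b hb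
    ext z
    constructor
    · rintro ⟨t, h1, h2, rfl⟩
      refine ⟨t n, h1 n, ?_⟩
      show Real.sqrt (f (Function.update (ins b a) n (t n))) = Real.sqrt (f t)
      have : Function.update (ins b a) n (t n) = t := by
        funext m
        by_cases hm : m = n
        · subst hm; simp [Function.update_self]
        · rw [Function.update_of_ne hm, h2 m hm]
      rw [this]
    · rintro ⟨x, hx, rfl⟩
      refine ⟨Function.update (ins b a) n x, ?_, ?_, rfl⟩
      · intro m
        by_cases hm : m = n
        · subst hm; simpa using hx
        · rw [Function.update_of_ne hm]
          by_cases hmn : m < n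
          · simpa [hins, hmn] using (hbox_mem b).mp hb ⟨m, hmn⟩
          · simpa [hins, hmn] using hA m hm
      · intro m hm
        rw [Function.update_of_ne hm]
  have hE_ne : ∀ b, b ∈ box → (E b).Nonempty := by
    intro b hb
    rw [hE_box b hb]
    exact ⟨_, ⟨1, Set.mem_Icc.mpr ⟨hlam1, le_refl 1⟩, rfl⟩⟩
  -- measurability of the auxiliary map
  have hupd_meas : Measurable fun p : (Fin n → ℝ) × ℝ => Function.update (ins p.1 a) n p.2 := by
    refine measurable_pi_lambda _ fun m => ?_
    simp only [Function.update_apply]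
    by_cases hm : m = n
    · simpa [hm] using measurable_snd
    · simp only [if_neg hm]
      by_cases hmn : m < n
      · simp only [hins, dif_pos hmn]
        exact (measurable_pi_apply _).comp measurable_fst
      · simp only [hins, dif_neg hmn]
        exact measurable_const
  have hG_meas : Measurable fun p : (Fin n → ℝ) × ℝ =>
      Real.sqrt (f (Function.update (ins p.1 a) n p.2)) :=
    (hmeas.comp hupd_meas).sqrt
  -- null-measurability of u
  have hu_null : NullMeasurable u Pn := by
    have key : ∀ c : ℝ, NullMeasurableSet {b | c < u b} Pn := by
      intro c
      set Ec : Set ((Fin n → ℝ) × ℝ) :=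
        {p | p.2 ∈ Set.Icc lam 1 ∧ c < Real.sqrt (f (Function.update (ins p.1 a) n p.2))}
        with hEc
      have hEc_meas : MeasurableSet Ec :=
        (measurable_snd measurableSet_Icc).inter (measurableSet_lt measurable_const hG_meas)
      have hWnull : NullMeasurableSet {b | ∃ x, (b, x) ∈ Ec} Pn :=
        nullMeasurableSet_proj Pn hEc_meas
      have hbox_iff : ∀ b, b ∈ box → (c < u b ↔ ∃ x, (b, x) ∈ Ec) := by
        intro b hb
        rw [hudef]
        simp only
        rw [hE_box b hb]
        constructor
        · intro h
          obtain ⟨z, hz, hcz⟩ := exists_lt_of_lt_csSup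
            ((Set.nonempty_Icc.mpr hlam1).image _) h
          obtain ⟨x, hx, rfl⟩ := hz
          exact ⟨x, hx, hcz⟩
        · rintro ⟨x, hx, hcx⟩
          refine lt_of_lt_of_le hcx (le_csSup ?_ ⟨x, hx, rfl⟩)
          rw [← hE_box b hb]
          exact hbddA b
      by_cases hc : c < 0
      · have hset : {b | c < u b} = (box ∩ {b | ∃ x, (b, x) ∈ Ec}) ∪ boxᶜ := by
          ext b
          by_cases hb : b ∈ box
          · simp only [Set.mem_setOf_eq, Set.mem_union, Set.mem_inter_iff, Set.mem_compl_iff,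
              hb, not_true_eq_false, or_false, true_and]
            exact hbox_iff b hb
          · simp only [Set.mem_setOf_eq, Set.mem_union, Set.mem_inter_iff, Set.mem_compl_iff,
              hb, not_false_eq_true, or_true, iff_true]
            rw [hudef]
            simp only
            rw [hE_empty b hb, Real.sSup_empty]
            exact hc
        rw [hset]
        exact ((hbox_meas.nullMeasurableSet).inter hWnull).union
          hbox_meas.compl.nullMeasurableSet
      · have hset : {b | c < u b} = box ∩ {b | ∃ x, (b, x) ∈ Ec} := by
          ext b
          by_cases hb : b ∈ box
          · simp only [Set.mem_setOf_eq, Set.mem_inter_iff, hb, true_and]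
            exact hbox_iff b hb
          · simp only [Set.mem_setOf_eq, Set.mem_inter_iff, hb, false_and, iff_false, not_lt]
            rw [hudef]
            simp only
            rw [hE_empty b hb, Real.sSup_empty]
            exact not_lt.mp hc
        rw [hset]
        exact (hbox_meas.nullMeasurableSet).inter hWnull
    exact measurable_of_Ioi (f := u) (α := ℝ) key
  -- null-measurability of v
  have hv_null : NullMeasurable v Pn := by
    have key : ∀ c : ℝ, NullMeasurableSet {b | v b < c} Pn := by
      intro c
      set Ec : Set ((Fin n → ℝ) × ℝ) :=
        {p | p.2 ∈ Set.Icc lam 1 ∧ Real.sqrt (f (Function.update (ins p.1 a) n p.2)) < c}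
        with hEc
      have hEc_meas : MeasurableSet Ec :=
        (measurable_snd measurableSet_Icc).inter (measurableSet_lt hG_meas measurable_const)
      have hWnull : NullMeasurableSet {b | ∃ x, (b, x) ∈ Ec} Pn :=
        nullMeasurableSet_proj Pn hEc_meas
      have hbox_iff : ∀ b, b ∈ box → (v b < c ↔ ∃ x, (b, x) ∈ Ec) := by
        intro b hb
        rw [hvdef]
        simp only
        rw [hE_box b hb]
        constructor
        · intro h
          obtain ⟨z, hz, hcz⟩ := exists_lt_of_csInf_lt
            ((Set.nonempty_Icc.mpr hlam1).image _) h
          obtain ⟨x, hx, rfl⟩ := hz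
          exact ⟨x, hx, hcz⟩
        · rintro ⟨x, hx, hcx⟩
          refine lt_of_le_of_lt (csInf_le ?_ ⟨x, hx, rfl⟩) hcx
          rw [← hE_box b hb]
          exact hbddB b
      by_cases hc : 0 < c
      · have hset : {b | v b < c} = (box ∩ {b | ∃ x, (b, x) ∈ Ec}) ∪ boxᶜ := by
          ext b
          by_cases hb : b ∈ box
          · simp only [Set.mem_setOf_eq, Set.mem_union, Set.mem_inter_iff, Set.mem_compl_iff,
              hb, not_true_eq_false, or_false, true_and]
            exact hbox_iff b hb
          · simp only [Set.mem_setOf_eq, Set.mem_union, Set.mem_inter_iff, Set.mem_compl_iff,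
              hb, not_false_eq_true, or_true, iff_true]
            rw [hvdef]
            simp only
            rw [hE_empty b hb, Real.sInf_empty]
            exact hc
        rw [hset]
        exact ((hbox_meas.nullMeasurableSet).inter hWnull).union
          hbox_meas.compl.nullMeasurableSet
      · have hset : {b | v b < c} = box ∩ {b | ∃ x, (b, x) ∈ Ec} := by
          ext b
          by_cases hb : b ∈ box
          · simp only [Set.mem_setOf_eq, Set.mem_inter_iff, hb, true_and]
            exact hbox_iff b hb
          · simp only [Set.mem_setOf_eq, Set.mem_inter_iff, hb, false_and, iff_false, not_lt]
            rw [hvdef]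
            simp only
            rw [hE_empty b hb, Real.sInf_empty]
            exact not_lt.mp hc
        rw [hset]
        exact (hbox_meas.nullMeasurableSet).inter hWnull
    exact measurable_of_Iio (f := v) (α := ℝ) key
  have hu_ae : AEMeasurable u Pn := hu_null.aemeasurable
  have hv_ae : AEMeasurable v Pn := hv_null.aemeasurable
  -- bounds for the oscillation
  have hk0 : ∀ b, 0 ≤ u b - v b := by
    intro b
    rcases Set.eq_empty_or_nonempty (E b) with he | hne
    · rw [hudef, hvdef]
      simp only
      rw [he, Real.sSup_empty, Real.sInf_empty, sub_zero]
    · exact sub_nonneg.mpr (csInf_le_csSup hne (hbddB b) (hbddA b))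
  have hkM : ∀ b, u b - v b ≤ Real.sqrt M := by
    intro b
    have h1 : u b ≤ Real.sqrt M :=
      Real.sSup_le (fun z hz => (helem b z hz).2) (Real.sqrt_nonneg _)
    have h2 : 0 ≤ v b := Real.sInf_nonneg fun z hz => (helem b z hz).1
    linarith
  -- integrability of the squared oscillation
  have hksq_int : Integrable (fun b => (u b - v b) ^ 2) Pn := by
    refine (integrable_const M).mono' ?_ ?_
    · exact (((hu_ae.sub hv_ae).pow aemeasurable_const)).aestronglyMeasurable
    · refine ae_of_all _ fun b => ?_
      rw [Real.norm_eq_abs, abs_of_nonneg (sq_nonneg _)]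
      calc (u b - v b) ^ 2 ≤ Real.sqrt M ^ 2 :=
            pow_le_pow_left₀ (hk0 b) (hkM b) 2
        _ = M := Real.sq_sqrt hMnn
  have hB0 : 0 ≤ ∫ b, (u b - v b) ^ 2 ∂Pn := integral_nonneg fun b => sq_nonneg _
  -- identification of the right-hand side
  have hRHS : avgBelow μs n
      (fun a' => (oscAt lam (fun a'' => Real.sqrt (f a'')) n a') ^ 2) a
      = ∫ b, (u b - v b) ^ 2 ∂Pn := by
    rw [havg]
    refine integral_congr_ae (ae_of_all _ fun b => ?_)
    show (oscAt lam (fun a'' => Real.sqrt (f a'')) n (ins b a)) ^ 2 = (u b - v b) ^ 2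
    rw [hosc b]
  -- membership of the relevant points in E b
  have hmemE : ∀ t : ℕ → ℝ, (∀ m, t m ∈ Set.Icc lam 1) → (∀ m, m ≠ n → t m = a m) →
      ∀ b, b ∈ box → Real.sqrt (f (ins b t)) ∈ E b := by
    intro t h1 h2 b hb
    refine ⟨ins b t, ?_, ?_, rfl⟩
    · intro m
      by_cases hmn : m < n
      · simpa [hins, hmn] using (hbox_mem b).mp hb ⟨m, hmn⟩
      · simpa [hins, hmn] using h1 m
    · intro m hm
      by_cases hmn : m < n
      · simp [hins, hmn]
      · simp only [hins, dif_neg hmn]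
        exact h2 m hm
  -- the key pairwise estimate
  set B : ℝ := ∫ b, (u b - v b) ^ 2 ∂Pn with hBdef
  have hkey : ∀ t : ℕ → ℝ, (∀ m, t m ∈ Set.Icc lam 1) → (∀ m, m ≠ n → t m = a m) →
      ∀ t' : ℕ → ℝ, (∀ m, t' m ∈ Set.Icc lam 1) → (∀ m, m ≠ n → t' m = a m) →
      Real.sqrt (avgBelow μs n f t) ≤ Real.sqrt (avgBelow μs n f t') + Real.sqrt B := by
    intro t ht1 ht2 t' ht1' ht2'
    set g : (Fin n → ℝ) → ℝ := fun b => Real.sqrt (f (ins b t)) with hgdef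
    set h : (Fin n → ℝ) → ℝ := fun b => Real.sqrt (f (ins b t')) with hhdef
    have hgm : Measurable g := (hmeas.comp (hins_meas t)).sqrt
    have hhm : Measurable h := (hmeas.comp (hins_meas t')).sqrt
    have hg0 : ∀ b, 0 ≤ g b := fun b => Real.sqrt_nonneg _
    have hh0 : ∀ b, 0 ≤ h b := fun b => Real.sqrt_nonneg _
    have hgC : ∀ b, g b ≤ Real.sqrt M := fun b => Real.sqrt_le_sqrt (hfM _)
    have hhC : ∀ b, h b ≤ Real.sqrt M := fun b => Real.sqrt_le_sqrt (hfM _)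
    have hAg : avgBelow μs n f t = ∫ b, g b ^ 2 ∂Pn := by
      rw [havg]
      refine integral_congr_ae (ae_of_all _ fun b => ?_)
      rw [hgdef]
      simp only
      rw [Real.sq_sqrt (hf0 _)]
    have hAh : avgBelow μs n f t' = ∫ b, h b ^ 2 ∂Pn := by
      rw [havg]
      refine integral_congr_ae (ae_of_all _ fun b => ?_)
      rw [hhdef]
      simp only
      rw [Real.sq_sqrt (hf0 _)]
    have htri := sqrt_integral_triangle Pn hgm hhm hg0 hh0 hgC hhC
    have hD_le : (∫ b, (g b - h b) ^ 2 ∂Pn) ≤ B := by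
      rw [hBdef]
      refine integral_mono_of_nonneg (ae_of_all _ fun b => sq_nonneg _) hksq_int ?_
      filter_upwards [hbox_ae] with b hb
      have hgE : g b ∈ E b := hmemE t ht1 ht2 b hb
      have hhE : h b ∈ E b := hmemE t' ht1' ht2' b hb
      have h1 : g b - h b ≤ u b - v b :=
        sub_le_sub (le_csSup (hbddA b) hgE) (csInf_le (hbddB b) hhE)
      have h2 : -(u b - v b) ≤ g b - h b := by
        have h3 : h b - g b ≤ u b - v b :=
          sub_le_sub (le_csSup (hbddA b) hhE) (csInf_le (hbddB b) hgE)
        linarith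
      exact sq_le_sq' h2 h1
    rw [hAg, hAh]
    refine le_trans htri (add_le_add_right ?_ _)
    exact Real.sqrt_le_sqrt hD_le
  -- conclusion
  set S : Set ℝ := {z | ∃ t : ℕ → ℝ, (∀ m, t m ∈ Set.Icc lam 1) ∧ (∀ m, m ≠ n → t m = a m) ∧
      z = Real.sqrt (avgBelow μs n f t)} with hSdef
  have hSne : S.Nonempty := by
    refine ⟨Real.sqrt (avgBelow μs n f (Function.update a n 1)), Function.update a n 1,
      ?_, ?_, rfl⟩
    · intro m
      by_cases hm : m = n
      · subst hm
        rw [Function.update_self]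
        exact Set.mem_Icc.mpr ⟨hlam1, le_refl 1⟩
      · rw [Function.update_of_ne hm]; exact hA m hm
    · intro m hm
      rw [Function.update_of_ne hm]
  have hmain : sSup S - sInf S ≤ Real.sqrt B := by
    rw [sub_le_iff_le_add]
    refine csSup_le hSne ?_
    rintro z ⟨t, ht1, ht2, rfl⟩
    rw [add_comm]
    rw [← sub_le_iff_le_add]
    refine le_csInf hSne ?_
    rintro z' ⟨t', ht1', ht2', rfl⟩
    have := hkey t ht1 ht2 t' ht1' ht2'
    linarith
  show sSup S - sInf S ≤ Real.sqrt (avgBelow μs n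
      (fun a' => (oscAt lam (fun a'' => Real.sqrt (f a'')) n a') ^ 2) a)
  rw [hRHS]
  exact hmain
end

section
/- Let d ≥ 3 and let K : ℤ^d × ℤ^d → ℝ satisfy |K(x,y)| ≤ ((|x−y|+1)(|y|+1))^{2(1−d)}. Then ∑_{y∈ℤ^d} |K(x,y)| ≤ C(d)·(|x|+1)^{2(1−d)} for all x ∈ ℤ^d, with a constant C(d) depending only on d. In dimension d = 2, one instead has ∑_{y∈ℤ²} ((|x−y|+1)(|y|+1))^{−2} ≤ C·(|x|+1)^{−2}·log(|x|+2). -/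
open Real

/-- The Euclidean norm of a lattice point of `ℤ^d`. -/
noncomputable def znorm {d : ℕ} (x : Fin d → ℤ) : ℝ :=
  Real.sqrt (∑ i, ((x i : ℝ)) ^ 2)

lemma znorm_nonneg {d : ℕ} (x : Fin d → ℤ) : 0 ≤ znorm x := Real.sqrt_nonneg _

lemma znorm_eq_norm {d : ℕ} (x : Fin d → ℤ) :
    znorm x = ‖(WithLp.equiv 2 (Fin d → ℝ)).symm (fun i => (x i : ℝ))‖ := by
  rw [EuclideanSpace.norm_eq]
  simp [znorm, sq_abs]

lemma znorm_triangle {d : ℕ} (x y : Fin d → ℤ) : znorm x ≤ znorm (x - y) + znorm y := by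
  rw [znorm_eq_norm, znorm_eq_norm, znorm_eq_norm]
  have h : (WithLp.equiv 2 (Fin d → ℝ)).symm (fun i => ((x i : ℝ)))
      = (WithLp.equiv 2 (Fin d → ℝ)).symm (fun i => (((x - y) i : ℝ)))
      + (WithLp.equiv 2 (Fin d → ℝ)).symm (fun i => ((y i : ℝ))) := by
    ext i
    simp only [WithLp.equiv_symm_apply, PiLp.toLp_apply, PiLp.add_apply, Pi.sub_apply]
    push_cast
    ring
  rw [h]
  exact norm_add_le _ _

lemma znorm_coord {d : ℕ} (x : Fin d → ℤ) (i : Fin d) : |(x i : ℝ)| ≤ znorm x := by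
  rw [← Real.sqrt_sq_eq_abs]
  apply Real.sqrt_le_sqrt
  exact Finset.single_le_sum (f := fun j => ((x j : ℝ))^2) (fun j _ => sq_nonneg _) (Finset.mem_univ i)

lemma summable_nat_shift {s : ℝ} (hs : 1 < s) :
    Summable (fun n : ℕ => ((n : ℝ) + 1) ^ (-s)) := by
  have h1 : Summable (fun n : ℕ => ((n : ℝ)) ^ (-s)) :=
    Real.summable_nat_rpow.2 (by linarith)
  have h2 := h1.comp_injective (add_left_injective 1)
  refine h2.congr fun n => ?_
  show (((n + 1 : ℕ) : ℝ)) ^ (-s) = _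
  push_cast
  ring_nf

lemma summable_int_rpow {s : ℝ} (hs : 1 < s) :
    Summable (fun t : ℤ => (|(t : ℝ)| + 1) ^ (-s)) := by
  apply Summable.of_nat_of_neg_add_one
  · refine (summable_nat_shift hs).congr fun n => ?_
    norm_num
  · refine Summable.of_nonneg_of_le (fun n => by positivity) (fun n => ?_)
      (summable_nat_shift hs)
    push_cast
    rw [abs_neg, abs_of_nonneg (by positivity)]
    apply Real.rpow_le_rpow_of_nonpos (by positivity) (by linarith) (by linarith)

lemma summable_pi_prod {d : ℕ} {f : ℤ → ℝ} (hf0 : ∀ t, 0 ≤ f t) (hf : Summable f) :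
    Summable (fun y : Fin d → ℤ => ∏ i, f (y i)) := by
  induction d with
  | zero => exact summable_of_finite_support (Set.toFinite _)
  | succ d ih =>
    have h := (hf.mul_of_nonneg ih (fun t => hf0 t)
      (fun y => Finset.prod_nonneg fun i _ => hf0 _))
    rw [← (Fin.consEquiv fun _ => ℤ).summable_iff]
    refine h.congr fun p => ?_
    show f p.1 * ∏ i, f (p.2 i) = ∏ i, f (((Fin.consEquiv fun _ => ℤ) p) i)
    rw [Fin.prod_univ_succ]
    simp [Fin.consEquiv]

set_option maxHeartbeats 1000000 in
lemma summable_znorm_rpow {d : ℕ} (hd : 1 ≤ d) {a : ℝ} (ha : (d : ℝ) < a) :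
    Summable (fun y : Fin d → ℤ => (znorm y + 1) ^ (-a)) := by
  have hdpos : (0:ℝ) < d := by exact_mod_cast hd
  have hs : 1 < a / d := (one_lt_div hdpos).2 ha
  have hsum : Summable (fun y : Fin d → ℤ => ∏ i, (|(y i : ℝ)| + 1) ^ (-(a/d))) :=
    summable_pi_prod (f := fun t : ℤ => (|(t : ℝ)| + 1) ^ (-(a/d)))
      (fun t => Real.rpow_nonneg (by positivity) _) (summable_int_rpow hs)
  refine Summable.of_nonneg_of_le (fun y => Real.rpow_nonneg (by linarith [znorm_nonneg y]) _) (fun y => ?_) hsum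
  -- (znorm y + 1)^(-a) ≤ ∏ i, (|y i| + 1)^(-(a/d))
  have h1 : ∀ i : Fin d, (0:ℝ) ≤ |(y i : ℝ)| + 1 := fun i => by positivity
  have hprod : ∏ i, (|(y i : ℝ)| + 1) ≤ (znorm y + 1) ^ (d : ℕ) := by
    calc ∏ i, (|(y i : ℝ)| + 1) ≤ ∏ _i : Fin d, (znorm y + 1) :=
          Finset.prod_le_prod (fun i _ => h1 i) (fun i _ => by linarith [znorm_coord y i])
      _ = (znorm y + 1) ^ (d : ℕ) := by simp
  have hzp : (0:ℝ) < znorm y + 1 := by linarith [znorm_nonneg y]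
  have hpp : (0:ℝ) ≤ ∏ i, (|(y i : ℝ)| + 1) := Finset.prod_nonneg fun i _ => h1 i
  calc (znorm y + 1) ^ (-a) = (((znorm y + 1) ^ (d:ℕ)) ^ (a / d))⁻¹ := by
        rw [← Real.rpow_natCast _ d, ← Real.rpow_mul hzp.le, Real.rpow_neg hzp.le]
        congr 2
        field_simp
    _ ≤ ((∏ i, (|(y i : ℝ)| + 1)) ^ (a / d))⁻¹ := by
        apply inv_anti₀
        · positivity
        · exact Real.rpow_le_rpow hpp hprod (by positivity)
    _ = ∏ i, (|(y i : ℝ)| + 1) ^ (-(a/d)) := by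
        rw [← Real.finset_prod_rpow _ _ (fun i _ => h1 i), ← Finset.prod_inv_distrib]
        exact Finset.prod_congr rfl fun i _ => by rw [← Real.rpow_neg (h1 i)]

lemma two_rpow_bound {A B m a : ℝ} (hA : 0 < A) (hm : 0 < m) (hmB : m ≤ 2 * B)
    (ha : 0 ≤ a) : A ^ (-a) * B ^ (-a) ≤ 2 ^ a * m ^ (-a) * A ^ (-a) := by
  have hB : 0 < B := by linarith
  have h1 : B ^ (-a) ≤ (m / 2) ^ (-a) :=
    Real.rpow_le_rpow_of_nonpos (by linarith) (by linarith) (by linarith)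
  have h2 : (m / 2) ^ (-a) = 2 ^ a * m ^ (-a) := by
    rw [Real.div_rpow hm.le (by norm_num), Real.rpow_neg (by norm_num : (0:ℝ) ≤ 2)]
    field_simp
  calc A ^ (-a) * B ^ (-a) ≤ A ^ (-a) * (2 ^ a * m ^ (-a)) := by
        apply mul_le_mul_of_nonneg_left _ (Real.rpow_nonneg hA.le _)
        rw [← h2]; exact h1
    _ = 2 ^ a * m ^ (-a) * A ^ (-a) := by ring

lemma kernel_bound {d : ℕ} (x y : Fin d → ℤ) {a : ℝ} (ha : 0 ≤ a) :
    ((znorm (x - y) + 1) * (znorm y + 1)) ^ (-a)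
      ≤ 2 ^ a * (znorm x + 1) ^ (-a)
        * ((znorm (x - y) + 1) ^ (-a) + (znorm y + 1) ^ (-a)) := by
  set A := znorm (x - y) + 1 with hAdef
  set B := znorm y + 1 with hBdef
  set m := znorm x + 1 with hmdef
  have hA : 0 < A := by simp [hAdef]; linarith [znorm_nonneg (x - y)]
  have hB : 0 < B := by simp [hBdef]; linarith [znorm_nonneg y]
  have hm : 0 < m := by simp [hmdef]; linarith [znorm_nonneg x]
  have htri : m ≤ A + B := by
    have := znorm_triangle x y
    simp [hAdef, hBdef, hmdef]; linarith
  rw [Real.mul_rpow hA.le hB.le]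
  have hApos := Real.rpow_nonneg hA.le (-a)
  have hBpos := Real.rpow_nonneg hB.le (-a)
  rcases le_total A B with h | h
  · have h1 : A ^ (-a) * B ^ (-a) ≤ 2 ^ a * m ^ (-a) * A ^ (-a) :=
      two_rpow_bound hA hm (by linarith) ha
    nlinarith [Real.rpow_nonneg hm.le (-a), Real.rpow_pos_of_pos (by norm_num : (0:ℝ) < 2) a,
      mul_nonneg (mul_nonneg (Real.rpow_pos_of_pos (by norm_num : (0:ℝ)<2) a).le (Real.rpow_nonneg hm.le (-a))) hBpos]
  · have h1 : A ^ (-a) * B ^ (-a) ≤ 2 ^ a * m ^ (-a) * B ^ (-a) := by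
      rw [mul_comm (A ^ (-a))]
      exact two_rpow_bound hB hm (by linarith) ha
    nlinarith [mul_nonneg (mul_nonneg (Real.rpow_pos_of_pos (by norm_num : (0:ℝ)<2) a).le (Real.rpow_nonneg hm.le (-a))) hApos]

lemma part1 : (∀ d : ℕ, 3 ≤ d → ∃ C : ℝ, ∀ K : (Fin d → ℤ) → (Fin d → ℤ) → ℝ,
      (∀ x y, |K x y| ≤ ((znorm (x - y) + 1) * (znorm y + 1)) ^ (2 * (1 - (d : ℝ)))) →
      ∀ x, ∑' y, |K x y| ≤ C * (znorm x + 1) ^ (2 * (1 - (d : ℝ)))) := by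
  intro d hd
  set a : ℝ := 2 * ((d : ℝ) - 1) with hadef
  have hexp : 2 * (1 - (d : ℝ)) = -a := by rw [hadef]; ring
  have had : (d : ℝ) < a := by
    have : (3:ℝ) ≤ (d:ℝ) := by exact_mod_cast hd
    rw [hadef]; linarith
  have ha0 : 0 ≤ a := by
    have : (3:ℝ) ≤ (d:ℝ) := by exact_mod_cast hd
    rw [hadef]; linarith
  have hS : Summable (fun y : Fin d → ℤ => (znorm y + 1) ^ (-a)) :=
    summable_znorm_rpow (by omega) had
  set S : ℝ := ∑' y : Fin d → ℤ, (znorm y + 1) ^ (-a) with hSdef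
  refine ⟨2 ^ a * 2 * S, fun K hK x => ?_⟩
  have hm : (0:ℝ) < znorm x + 1 := by linarith [znorm_nonneg x]
  set F : (Fin d → ℤ) → ℝ := fun z => (znorm z + 1) ^ (-a) with hFdef
  have htrans : Summable (fun y : Fin d → ℤ => F (x - y)) :=
    ((Equiv.subLeft x).summable_iff (f := F)).2 hS
  set G : (Fin d → ℤ) → ℝ :=
    fun y => 2 ^ a * (znorm x + 1) ^ (-a) * (F (x - y) + F y) with hGdef
  have hG : Summable G := (htrans.add hS).mul_left _
  have hKG : ∀ y, |K x y| ≤ G y := by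
    intro y
    refine (hK x y).trans ?_
    rw [hexp]
    exact kernel_bound x y ha0
  have hKsum : Summable (fun y => |K x y|) :=
    Summable.of_nonneg_of_le (fun y => abs_nonneg _) hKG hG
  calc ∑' y, |K x y| ≤ ∑' y, G y := Summable.tsum_le_tsum hKG hKsum hG
    _ = 2 ^ a * (znorm x + 1) ^ (-a) * ((∑' y, F (x - y)) + S) := by
        rw [hGdef, tsum_mul_left, Summable.tsum_add htrans hS]
    _ = 2 ^ a * (znorm x + 1) ^ (-a) * (S + S) := by
        have h2 : (∑' (y : Fin d → ℤ), F (x - y)) = S := (Equiv.subLeft x).tsum_eq F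
        rw [h2]
    _ = 2 ^ a * 2 * S * (znorm x + 1) ^ (2 * (1 - (d:ℝ))) := by
        rw [hexp]; ring

def natN (z : Fin 2 → ℤ) : ℕ := max (z 0).natAbs (z 1).natAbs

lemma abs_coord_le_natN (z : Fin 2 → ℤ) (i : Fin 2) : |(z i : ℝ)| ≤ (natN z : ℝ) := by
  have h : (z i).natAbs ≤ natN z := by
    fin_cases i
    · exact le_max_left _ _
    · exact le_max_right _ _
  calc |(z i : ℝ)| = ((z i).natAbs : ℝ) := by
        rw [Nat.cast_natAbs]; push_cast; rfl
    _ ≤ (natN z : ℝ) := by exact_mod_cast h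

lemma natN_le_znorm (z : Fin 2 → ℤ) : (natN z : ℝ) ≤ znorm z := by
  rcases max_cases (z 0).natAbs (z 1).natAbs with ⟨h, _⟩ | ⟨h, _⟩
  · rw [natN, h]
    calc ((z 0).natAbs : ℝ) = |(z 0 : ℝ)| := by rw [Nat.cast_natAbs]; push_cast; rfl
      _ ≤ znorm z := znorm_coord z 0
  · rw [natN, h]
    calc ((z 1).natAbs : ℝ) = |(z 1 : ℝ)| := by rw [Nat.cast_natAbs]; push_cast; rfl
      _ ≤ znorm z := znorm_coord z 1

lemma znorm_le_natN (z : Fin 2 → ℤ) : znorm z ≤ 2 * natN z := by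
  have h0 := abs_coord_le_natN z 0
  have h1 := abs_coord_le_natN z 1
  have hthis : znorm z ≤ |(z 0 : ℝ)| + |(z 1 : ℝ)| := by
    rw [znorm, Fin.sum_univ_two]
    rw [show |(z 0 : ℝ)| + |(z 1 : ℝ)| = Real.sqrt ((|(z 0:ℝ)| + |(z 1:ℝ)|)^2) by
      rw [Real.sqrt_sq (by positivity)]]
    apply Real.sqrt_le_sqrt
    nlinarith [abs_nonneg (z 0 : ℝ), abs_nonneg (z 1 : ℝ), sq_abs (z 0 : ℝ), sq_abs (z 1 : ℝ)]
  linarith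

lemma natN_triangle (x y : Fin 2 → ℤ) : natN x ≤ natN (x - y) + natN y := by
  have h : ∀ i : Fin 2, (x i).natAbs ≤ ((x - y) i).natAbs + (y i).natAbs := by
    intro i
    have hh : (x - y) i = x i - y i := rfl
    rw [hh]
    omega
  rw [natN]
  apply max_le
  · exact le_trans (h 0) (add_le_add (le_max_left _ _) (le_max_left _ _))
  · exact le_trans (h 1) (add_le_add (le_max_right _ _) (le_max_right _ _))

noncomputable def shellF (n : ℕ) : Finset (ℤ × ℤ) :=
  (Finset.Icc (-(n:ℤ)) n ×ˢ ({-(n:ℤ), (n:ℤ)} : Finset ℤ)) ∪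
    (({-(n:ℤ), (n:ℤ)} : Finset ℤ) ×ˢ Finset.Icc (-(n:ℤ)) n)

lemma card_shellF (n : ℕ) : (shellF n).card ≤ 8 * n + 4 := by
  have hIcc : (Finset.Icc (-(n:ℤ)) n).card = 2 * n + 1 := by
    rw [Int.card_Icc]
    omega
  have hpair : ({-(n:ℤ), (n:ℤ)} : Finset ℤ).card ≤ 2 :=
    le_trans (Finset.card_insert_le _ _) (by simp)
  calc (shellF n).card ≤ (Finset.Icc (-(n:ℤ)) n ×ˢ ({-(n:ℤ), (n:ℤ)} : Finset ℤ)).card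
        + (({-(n:ℤ), (n:ℤ)} : Finset ℤ) ×ˢ Finset.Icc (-(n:ℤ)) n).card :=
        Finset.card_union_le _ _
    _ ≤ (2*n+1) * 2 + 2 * (2*n+1) := by
        rw [Finset.card_product, Finset.card_product, hIcc]
        exact add_le_add (Nat.mul_le_mul_left _ hpair) (Nat.mul_le_mul_right _ hpair)
    _ ≤ 8 * n + 4 := by omega

lemma mem_shellF {z : Fin 2 → ℤ} {n : ℕ} (h : natN z = n) : (z 0, z 1) ∈ shellF n := by
  rw [natN] at h
  have h0 : (z 0).natAbs ≤ n := le_trans (le_max_left _ _) h.le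
  have h1 : (z 1).natAbs ≤ n := le_trans (le_max_right _ _) h.le
  have hor : (z 0).natAbs = n ∨ (z 1).natAbs = n := by omega
  rw [shellF, Finset.mem_union]
  rcases hor with h' | h'
  · right
    rw [Finset.mem_product]
    constructor
    · simp only [Finset.mem_insert, Finset.mem_singleton]; omega
    · simp only [Finset.mem_Icc]; omega
  · left
    rw [Finset.mem_product]
    constructor
    · simp only [Finset.mem_Icc]; omega
    · simp only [Finset.mem_insert, Finset.mem_singleton]; omega

lemma card_filter_natN (n : ℕ) (F : Finset (Fin 2 → ℤ)) :
    (F.filter (fun z => natN z = n)).card ≤ 8 * n + 4 := by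
  refine le_trans (Finset.card_le_card_of_injOn (fun z => (z 0, z 1))
    (fun z hz => ?_) (fun z _ w _ hzw => ?_)) (card_shellF n)
  · exact mem_shellF (Finset.mem_filter.1 hz).2
  · funext i
    fin_cases i
    · exact congrArg Prod.fst hzw
    · exact congrArg Prod.snd hzw

lemma tsum_layer {f : ℕ → ℝ} (hf0 : ∀ n, 0 ≤ f n)
    (hFsum : Summable (fun z : Fin 2 → ℤ => f (natN z)))
    (hg : Summable (fun n : ℕ => (8 * (n:ℝ) + 4) * f n)) :
    ∑' z : Fin 2 → ℤ, f (natN z) ≤ ∑' n : ℕ, (8 * (n:ℝ) + 4) * f n := by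
  refine Summable.tsum_le_of_sum_le hFsum fun s => ?_
  rw [Finset.sum_comp f natN]
  calc ∑ b ∈ Finset.image natN s, (Finset.filter (fun a => natN a = b) s).card • f b
      ≤ ∑ b ∈ Finset.image natN s, (8 * (b:ℝ) + 4) * f b := by
        refine Finset.sum_le_sum fun b _ => ?_
        rw [nsmul_eq_mul]
        apply mul_le_mul_of_nonneg_right _ (hf0 b)
        calc ((Finset.filter (fun a => natN a = b) s).card : ℝ) ≤ ((8 * b + 4 : ℕ) : ℝ) := by
              exact_mod_cast card_filter_natN b s
          _ = 8 * (b:ℝ) + 4 := by push_cast; ring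
    _ ≤ ∑' n : ℕ, (8 * (n:ℝ) + 4) * f n :=
        Summable.sum_le_tsum _ (fun n _ => mul_nonneg (by positivity) (hf0 n)) hg

lemma harmonic_le' (M : ℕ) :
    ∑ n ∈ Finset.range M, (1:ℝ)/((n:ℝ)+1) ≤ 1 + Real.log ((M:ℝ)+1) - 1/((M:ℝ)+1) := by
  induction M with
  | zero => simp
  | succ M ih =>
    rw [Finset.sum_range_succ]
    have h1 : (0:ℝ) < (M:ℝ)+1 := by positivity
    have h2 : (0:ℝ) < (M:ℝ)+2 := by positivity
    have key : (1:ℝ)/((M:ℝ)+2) ≤ Real.log ((M:ℝ)+2) - Real.log ((M:ℝ)+1) := by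
      have h3 := Real.log_le_sub_one_of_pos (show (0:ℝ) < ((M:ℝ)+1)/((M:ℝ)+2) by positivity)
      rw [Real.log_div h1.ne' h2.ne'] at h3
      have h4 : ((M:ℝ)+1)/((M:ℝ)+2) - 1 = -(1/((M:ℝ)+2)) := by
        field_simp
        norm_num
      rw [h4] at h3
      linarith
    push_cast
    have hc : ((M:ℝ)+1+1) = (M:ℝ)+2 := by ring
    rw [hc]
    linarith

lemma harmonic_le (M : ℕ) :
    ∑ n ∈ Finset.range M, (1:ℝ)/((n:ℝ)+1) ≤ 1 + Real.log ((M:ℝ)+1) := by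
  have h := harmonic_le' M
  have : (0:ℝ) < 1/((M:ℝ)+1) := by positivity
  linarith

lemma tail_cube (M : ℕ) :
    (∑' k : ℕ, (1:ℝ)/((M:ℝ)+(k:ℝ)+1)^3 ≤ 2/((M:ℝ)+1)^2) ∧
    Summable (fun k : ℕ => (1:ℝ)/((M:ℝ)+(k:ℝ)+1)^3) := by
  set u : ℕ → ℝ := fun k => 1/((M:ℝ)+(k:ℝ)+1) with hu
  have hterm : ∀ k : ℕ, (1:ℝ)/((M:ℝ)+(k:ℝ)+1)^3 ≤ 2/((M:ℝ)+1) * (u k - u (k+1)) := by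
    intro k
    have h1 : (0:ℝ) < (M:ℝ)+(k:ℝ)+1 := by positivity
    have h2 : (0:ℝ) < (M:ℝ)+(k:ℝ)+2 := by positivity
    have h3 : (0:ℝ) < (M:ℝ)+1 := by positivity
    have hukk : u k - u (k+1) = 1/(((M:ℝ)+(k:ℝ)+1)*((M:ℝ)+(k:ℝ)+2)) := by
      rw [hu]
      simp only []
      push_cast
      rw [div_sub_div _ _ h1.ne' (by positivity : ((M:ℝ)+(↑k+1)+1) ≠ 0)]
      rw [div_eq_div_iff (by positivity) (by positivity)]
      ring
    rw [hukk, div_mul_div_comm, mul_one, div_le_div_iff₀ (by positivity) (by positivity)]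
    have hM : (M:ℝ)+1 ≤ (M:ℝ)+(k:ℝ)+1 := by
      have : (0:ℝ) ≤ (k:ℝ) := Nat.cast_nonneg k
      linarith
    nlinarith [h1, h2, h3, sq_nonneg ((M:ℝ)+(k:ℝ)+1)]
  have hpartial : ∀ K : ℕ, ∑ k ∈ Finset.range K, (1:ℝ)/((M:ℝ)+(k:ℝ)+1)^3 ≤ 2/((M:ℝ)+1)^2 := by
    intro K
    calc ∑ k ∈ Finset.range K, (1:ℝ)/((M:ℝ)+(k:ℝ)+1)^3
        ≤ ∑ k ∈ Finset.range K, 2/((M:ℝ)+1) * (u k - u (k+1)) :=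
          Finset.sum_le_sum fun k _ => hterm k
      _ = 2/((M:ℝ)+1) * (u 0 - u K) := by
          rw [← Finset.mul_sum, Finset.sum_range_sub' u K]
      _ ≤ 2/((M:ℝ)+1)^2 := by
          have h3 : (0:ℝ) < (M:ℝ)+1 := by positivity
          have hu0 : u 0 = 1/((M:ℝ)+1) := by rw [hu]; push_cast; ring_nf
          have huK : 0 ≤ u K := by rw [hu]; positivity
          have h5 : 2/((M:ℝ)+1) * (u 0 - u K) ≤ 2/((M:ℝ)+1) * u 0 := by
            apply mul_le_mul_of_nonneg_left _ (by positivity)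
            linarith
          have h6 : 2/((M:ℝ)+1) * u 0 = 2/((M:ℝ)+1)^2 := by
            rw [hu0]; field_simp
          linarith
  have hnn : ∀ k : ℕ, (0:ℝ) ≤ 1/((M:ℝ)+(k:ℝ)+1)^3 := fun k => by positivity
  exact ⟨Real.tsum_le_of_sum_range_le hnn hpartial, summable_of_sum_range_le hnn hpartial⟩

lemma rpow_neg_two {t : ℝ} (ht : 0 < t) : t ^ (-2:ℝ) = 1/t^2 := by
  rw [show (-2:ℝ) = ((-2:ℤ):ℝ) by norm_num, Real.rpow_intCast]
  rw [zpow_neg, one_div]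
  norm_cast

set_option maxHeartbeats 2000000 in
lemma part2 : ∃ C : ℝ, ∀ x : Fin 2 → ℤ,
    ∑' y : Fin 2 → ℤ, ((znorm (x - y) + 1) * (znorm y + 1)) ^ (-2 : ℝ)
      ≤ C * (znorm x + 1) ^ (-2 : ℝ) * Real.log (znorm x + 2) := by
  refine ⟨1024, fun x => ?_⟩
  set M : ℕ := natN x with hMdef
  set m : ℝ := (M:ℝ) + 1 with hmdef
  have hm : (0:ℝ) < m := by positivity
  set f : ℕ → ℝ := fun n => min (4/(m^2*((n:ℝ)+1)^2)) (1/((n:ℝ)+1)^4) with hfdef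
  have hf0 : ∀ n, 0 ≤ f n := fun n => le_min (by positivity) (by positivity)
  have hfle : ∀ n : ℕ, f n ≤ 1/((n:ℝ)+1)^4 := fun n => min_le_right _ _
  -- pointwise bound
  have hpoint : ∀ y : Fin 2 → ℤ,
      ((znorm (x - y) + 1) * (znorm y + 1)) ^ (-2 : ℝ)
        ≤ f (natN (x - y)) + f (natN y) := by
    intro y
    set a : ℕ := natN (x - y) with hadef
    set b : ℕ := natN y with hbdef
    set p : ℝ := (a:ℝ) + 1 with hpdef
    set q : ℝ := (b:ℝ) + 1 with hqdef
    have hp : (0:ℝ) < p := by positivity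
    have hq : (0:ℝ) < q := by positivity
    have hA : p ≤ znorm (x - y) + 1 := by
      have := natN_le_znorm (x - y); rw [hpdef, hadef]; linarith
    have hB : q ≤ znorm y + 1 := by
      have := natN_le_znorm y; rw [hqdef, hbdef]; linarith
    have hAB : (0:ℝ) < (znorm (x - y) + 1) * (znorm y + 1) := by
      have h1 := znorm_nonneg (x - y); have h2 := znorm_nonneg y
      positivity
    rw [rpow_neg_two hAB]
    have step1 : 1/((znorm (x - y) + 1) * (znorm y + 1))^2 ≤ 1/(p*q)^2 := by
      apply div_le_div_of_nonneg_left (by norm_num) (by positivity)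
      have h5 : p * q ≤ (znorm (x - y) + 1) * (znorm y + 1) :=
        mul_le_mul hA hB hq.le (by linarith [znorm_nonneg (x - y)])
      exact pow_le_pow_left₀ (mul_nonneg hp.le hq.le) h5 2
    refine step1.trans ?_
    -- triangle: m ≤ p + q
    have htri : m ≤ p + q := by
      have h := natN_triangle x y
      rw [hmdef, hpdef, hqdef, hadef, hbdef]
      have : (M:ℝ) ≤ (natN (x-y) : ℝ) + (natN y : ℝ) := by exact_mod_cast h
      linarith
    rcases le_total p q with h | h
    · -- use f a
      have h2q : m ≤ 2 * q := by linarith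
      have key : 1/(p*q)^2 ≤ f a := by
        rw [hfdef]
        apply le_min
        · rw [div_le_div_iff₀ (by positivity) (by positivity)]
          have heq : p = (a:ℝ) + 1 := hpdef
          rw [← heq]
          have hq2 : m^2 ≤ 4*q^2 := by nlinarith
          nlinarith [mul_le_mul_of_nonneg_right hq2 (sq_nonneg p)]
        · rw [div_le_div_iff₀ (by positivity) (by positivity)]
          have heq : p = (a:ℝ) + 1 := hpdef
          rw [← heq]
          have hpq : p^2 ≤ q^2 := by nlinarith
          nlinarith [mul_le_mul_of_nonneg_left hpq (sq_nonneg p)]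
      exact key.trans (le_add_of_nonneg_right (hf0 b))
    · have h2p : m ≤ 2 * p := by linarith
      have key : 1/(p*q)^2 ≤ f b := by
        rw [hfdef]
        apply le_min
        · rw [div_le_div_iff₀ (by positivity) (by positivity)]
          have heq : q = (b:ℝ) + 1 := hqdef
          rw [← heq]
          have hp2 : m^2 ≤ 4*p^2 := by nlinarith
          nlinarith [mul_le_mul_of_nonneg_right hp2 (sq_nonneg q)]
        · rw [div_le_div_iff₀ (by positivity) (by positivity)]
          have heq : q = (b:ℝ) + 1 := hqdef
          rw [← heq]
          have hqp : q^2 ≤ p^2 := by nlinarith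
          nlinarith [mul_le_mul_of_nonneg_left hqp (sq_nonneg q)]
      exact key.trans (le_add_of_nonneg_left (hf0 a))
  -- summability of f ∘ natN
  have hcube : Summable (fun n : ℕ => (1:ℝ)/((n:ℝ)+1)^3) := by
    have h := (tail_cube 0).2
    refine h.congr fun n => ?_
    norm_num
  have h1d : Summable (fun t : ℤ => 1/((|(t:ℝ)|+1)^2)) := by
    refine (summable_int_rpow (s := 2) (by norm_num)).congr fun t => ?_
    rw [rpow_neg_two (by positivity)]
  have hprodsum : Summable (fun z : Fin 2 → ℤ => ∏ i, 1/((|(z i : ℝ)|+1)^2)) :=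
    summable_pi_prod (f := fun t : ℤ => 1/((|(t:ℝ)|+1)^2)) (fun t => by positivity) h1d
  have hfNz : Summable (fun z : Fin 2 → ℤ => f (natN z)) := by
    refine Summable.of_nonneg_of_le (fun z => hf0 _) (fun z => ?_) hprodsum
    refine (hfle _).trans ?_
    rw [Fin.prod_univ_two]
    have h0 := abs_coord_le_natN z 0
    have h1 := abs_coord_le_natN z 1
    have ha0 := abs_nonneg ((z 0 : ℝ))
    have ha1 := abs_nonneg ((z 1 : ℝ))
    rw [div_mul_div_comm, one_mul, div_le_div_iff₀ (by positivity) (by positivity)]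
    have e0 : (|(z 0 : ℝ)|+1)^2 ≤ ((natN z:ℝ)+1)^2 := by
      apply pow_le_pow_left₀ (by positivity) (by linarith)
    have e1 : (|(z 1 : ℝ)|+1)^2 ≤ ((natN z:ℝ)+1)^2 := by
      apply pow_le_pow_left₀ (by positivity) (by linarith)
    nlinarith [mul_le_mul e0 e1 (by positivity) (by positivity : (0:ℝ) ≤ ((natN z:ℝ)+1)^2)]
  have htransf : Summable (fun y : Fin 2 → ℤ => f (natN (x - y))) :=
    ((Equiv.subLeft x).summable_iff (f := fun z => f (natN z))).2 hfNz
  -- summability of the weighted sequence on ℕ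
  have hg : Summable (fun n : ℕ => (8 * (n:ℝ) + 4) * f n) := by
    refine Summable.of_nonneg_of_le (fun n => mul_nonneg (by positivity) (hf0 n))
      (fun n => ?_) (hcube.mul_left 8)
    calc (8 * (n:ℝ) + 4) * f n ≤ (8 * (n:ℝ) + 8) * (1/((n:ℝ)+1)^4) := by
          apply mul_le_mul (by linarith) (hfle n) (hf0 n) (by positivity)
      _ = 8 * (1/((n:ℝ)+1)^3) := by
          field_simp
  -- summability of kernel
  have hker : Summable (fun y : Fin 2 → ℤ =>
      ((znorm (x - y) + 1) * (znorm y + 1)) ^ (-2 : ℝ)) := by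
    refine Summable.of_nonneg_of_le (fun y => Real.rpow_nonneg ?_ _) hpoint (htransf.add hfNz)
    have h1 := znorm_nonneg (x - y); have h2 := znorm_nonneg y
    positivity
  -- main chain
  have step2 : ∑' y : Fin 2 → ℤ, ((znorm (x - y) + 1) * (znorm y + 1)) ^ (-2 : ℝ)
      ≤ 2 * ∑' z : Fin 2 → ℤ, f (natN z) := by
    calc ∑' y : Fin 2 → ℤ, ((znorm (x - y) + 1) * (znorm y + 1)) ^ (-2 : ℝ)
        ≤ ∑' y : Fin 2 → ℤ, (f (natN (x - y)) + f (natN y)) :=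
          Summable.tsum_le_tsum hpoint hker (htransf.add hfNz)
      _ = (∑' y : Fin 2 → ℤ, f (natN (x - y))) + ∑' z : Fin 2 → ℤ, f (natN z) :=
          Summable.tsum_add htransf hfNz
      _ = 2 * ∑' z : Fin 2 → ℤ, f (natN z) := by
          have h2 : (∑' y : Fin 2 → ℤ, f (natN (x - y))) = ∑' z : Fin 2 → ℤ, f (natN z) :=
            (Equiv.subLeft x).tsum_eq (fun z => f (natN z))
          rw [h2]; ring
  -- bound on ∑' n (8n+4) f n
  have hT : ∑' n : ℕ, (8 * (n:ℝ) + 4) * f n ≤ (32 * (1 + Real.log m) + 16)/m^2 := by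
    have hsplit := Summable.sum_add_tsum_nat_add (f := fun n : ℕ => (8 * (n:ℝ) + 4) * f n) M hg
    rw [← hsplit]
    have hrange : ∑ n ∈ Finset.range M, (8 * (n:ℝ) + 4) * f n ≤ 32 * (1 + Real.log m)/m^2 := by
      calc ∑ n ∈ Finset.range M, (8 * (n:ℝ) + 4) * f n
          ≤ ∑ n ∈ Finset.range M, 32/m^2 * (1/((n:ℝ)+1)) := by
            refine Finset.sum_le_sum fun n _ => ?_
            have h1 : f n ≤ 4/(m^2*((n:ℝ)+1)^2) := min_le_left _ _
            calc (8 * (n:ℝ) + 4) * f n ≤ (8 * (n:ℝ) + 8) * (4/(m^2*((n:ℝ)+1)^2)) :=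
                  mul_le_mul (by linarith) h1 (hf0 n) (by positivity)
              _ = 32/m^2 * (1/((n:ℝ)+1)) := by
                  field_simp
                  ring
        _ = 32/m^2 * ∑ n ∈ Finset.range M, (1:ℝ)/((n:ℝ)+1) := by
            rw [Finset.mul_sum]
        _ ≤ 32/m^2 * (1 + Real.log m) := by
            apply mul_le_mul_of_nonneg_left _ (by positivity)
            rw [hmdef]
            exact harmonic_le M
        _ = 32 * (1 + Real.log m)/m^2 := by ring
    have htail : ∑' k : ℕ, (8 * ((k + M : ℕ):ℝ) + 4) * f (k + M) ≤ 16/m^2 := by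
      have hbnd : ∀ k : ℕ, (8 * ((k + M : ℕ):ℝ) + 4) * f (k + M)
          ≤ 8 * (1/((M:ℝ)+(k:ℝ)+1)^3) := by
        intro k
        have h1 : f (k + M) ≤ 1/(((k + M : ℕ):ℝ)+1)^4 := hfle _
        calc (8 * ((k + M : ℕ):ℝ) + 4) * f (k + M)
            ≤ (8 * ((k + M : ℕ):ℝ) + 8) * (1/(((k + M : ℕ):ℝ)+1)^4) :=
              mul_le_mul (by linarith) h1 (hf0 _) (by positivity)
          _ = 8 * (1/(((k + M : ℕ):ℝ)+1)^3) := by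
              push_cast
              field_simp
          _ = 8 * (1/((M:ℝ)+(k:ℝ)+1)^3) := by
              push_cast
              ring_nf
      have hsum1 : Summable (fun k : ℕ => (8 * ((k + M : ℕ):ℝ) + 4) * f (k + M)) := by
        exact (summable_nat_add_iff M).2 hg
      have hsum2 : Summable (fun k : ℕ => 8 * ((1:ℝ)/((M:ℝ)+(k:ℝ)+1)^3)) :=
        (tail_cube M).2.mul_left 8
      calc ∑' k : ℕ, (8 * ((k + M : ℕ):ℝ) + 4) * f (k + M)
          ≤ ∑' k : ℕ, 8 * ((1:ℝ)/((M:ℝ)+(k:ℝ)+1)^3) := Summable.tsum_le_tsum hbnd hsum1 hsum2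
        _ = 8 * ∑' k : ℕ, (1:ℝ)/((M:ℝ)+(k:ℝ)+1)^3 := tsum_mul_left
        _ ≤ 8 * (2/((M:ℝ)+1)^2) := by
            apply mul_le_mul_of_nonneg_left (tail_cube M).1 (by norm_num)
        _ = 16/m^2 := by rw [hmdef]; ring
    calc ∑ n ∈ Finset.range M, (8 * (n:ℝ) + 4) * f n
          + ∑' k : ℕ, (8 * ((k + M : ℕ):ℝ) + 4) * f (k + M)
        ≤ 32 * (1 + Real.log m)/m^2 + 16/m^2 := by
          apply add_le_add hrange
          exact htail
      _ = (32 * (1 + Real.log m) + 16)/m^2 := by ring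
  -- layer cake
  have hlayer := tsum_layer hf0 hfNz hg
  -- final comparison
  set L : ℝ := Real.log (znorm x + 2) with hLdef
  have hzx : (0:ℝ) ≤ znorm x := znorm_nonneg x
  have hL2 : Real.log 2 ≤ L := by
    rw [hLdef]
    apply Real.log_le_log (by norm_num)
    linarith
  have hLpos : (1:ℝ)/2 ≤ L := by
    have := Real.log_two_gt_d9
    linarith
  have hlogm : Real.log m ≤ L := by
    rw [hLdef]
    apply Real.log_le_log hm
    have h1 := natN_le_znorm x
    rw [hmdef, hMdef]
    linarith
  have hminv : 1/m^2 ≤ 4/(znorm x + 1)^2 := by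
    have h1 := znorm_le_natN x
    rw [div_le_div_iff₀ (by positivity) (by positivity)]
    rw [hmdef, hMdef]
    have h2 : znorm x + 1 ≤ 2*((natN x:ℝ))+1 := by linarith
    have h3 : (znorm x+1)^2 ≤ (2*((natN x:ℝ))+1)^2 :=
      pow_le_pow_left₀ (by linarith) h2 2
    nlinarith [(Nat.cast_nonneg (natN x) : (0:ℝ) ≤ (natN x : ℝ))]
  have hfinal : (32 * (1 + Real.log m) + 16)/m^2 ≤ 512 * L * (1/(znorm x + 1)^2) := by
    have hnum : 32 * (1 + Real.log m) + 16 ≤ 128 * L := by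
      nlinarith
    have hlog0 : (0:ℝ) ≤ Real.log m := Real.log_nonneg (by rw [hmdef]; have := (Nat.cast_nonneg M : (0:ℝ) ≤ (M:ℝ)); linarith)
    have hnumnn : (0:ℝ) ≤ 32 * (1 + Real.log m) + 16 := by nlinarith
    calc (32 * (1 + Real.log m) + 16)/m^2 ≤ 128 * L * (1/m^2) := by
          rw [div_eq_mul_one_div]
          apply mul_le_mul_of_nonneg_right hnum (by positivity)
      _ ≤ 128 * L * (4/(znorm x + 1)^2) := by
          apply mul_le_mul_of_nonneg_left hminv (by nlinarith)
      _ = 512 * L * (1/(znorm x + 1)^2) := by ring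
  have hrw : (znorm x + 1) ^ (-2:ℝ) = 1/(znorm x + 1)^2 := rpow_neg_two (by linarith)
  rw [hrw]
  calc ∑' y : Fin 2 → ℤ, ((znorm (x - y) + 1) * (znorm y + 1)) ^ (-2 : ℝ)
      ≤ 2 * ∑' z : Fin 2 → ℤ, f (natN z) := step2
    _ ≤ 2 * ((32 * (1 + Real.log m) + 16)/m^2) := by
        apply mul_le_mul_of_nonneg_left (hlayer.trans hT) (by norm_num)
    _ ≤ 2 * (512 * L * (1/(znorm x + 1)^2)) := by
        apply mul_le_mul_of_nonneg_left hfinal (by norm_num)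
    _ = 1024 * (1/(znorm x + 1)^2) * L := by ring

/-- Convolution estimate for the kernel `((|x−y|+1)(|y|+1))^{2(1−d)}` on `ℤ^d`:
summability with optimal decay for `d ≥ 3`, and a logarithmic correction for `d = 2`. -/
theorem kernel_convolution_estimate :
    (∀ d : ℕ, 3 ≤ d → ∃ C : ℝ, ∀ K : (Fin d → ℤ) → (Fin d → ℤ) → ℝ,
      (∀ x y, |K x y| ≤ ((znorm (x - y) + 1) * (znorm y + 1)) ^ (2 * (1 - (d : ℝ)))) →
      ∀ x, ∑' y, |K x y| ≤ C * (znorm x + 1) ^ (2 * (1 - (d : ℝ)))) ∧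
    (∃ C : ℝ, ∀ x : Fin 2 → ℤ,
      ∑' y : Fin 2 → ℤ, ((znorm (x - y) + 1) * (znorm y + 1)) ^ (-2 : ℝ)
        ≤ C * (znorm x + 1) ^ (-2 : ℝ) * Real.log (znorm x + 2)) :=
  ⟨part1, part2⟩
end

section
/- Let d ≥ 1, p ≥ 1, and β > 0 satisfy 2p(β − d) + d < 0. Then for every x ∈ ℤ^d and edge b of ℤ^d, ∑_{e : |e−b| ≥ |b−x|/2} (|e−x|+1)^{2pβ}·(|e−b|+1)^{−2pd} ≤ C(d,p,β)·(|b−x|+1)^{2p(β−d)+d}, where the sum runs over edges e of ℤ^d, |e−b| denotes the distance between edge midpoints, and C(d,p,β) depends only on d, p, β. -/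
open Real

/-- An edge of the lattice `ℤ^d`: the pair `(x, i)` represents the edge `[x, x + eᵢ]`. -/
abbrev Edge (d : ℕ) := (Fin d → ℤ) × Fin d

/-- The midpoint of an edge, as a point of `ℝ^d`. -/
noncomputable def emid {d : ℕ} (e : Edge d) : Fin d → ℝ :=
  fun j => (e.1 j : ℝ) + if j = e.2 then 1 / 2 else 0

/-- The Euclidean distance between the midpoints of two edges. -/
noncomputable def edist' {d : ℕ} (e b : Edge d) : ℝ :=
  Real.sqrt (∑ j, (emid e j - emid b j) ^ 2)

/-- The Euclidean distance between the midpoint of an edge and a vertex. -/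
noncomputable def evdist {d : ℕ} (b : Edge d) (x : Fin d → ℤ) : ℝ :=
  Real.sqrt (∑ j, (emid b j - (x j : ℝ)) ^ 2)

open scoped ENNReal

section Aux

/-- The edge midpoint as a point of Euclidean space. -/
noncomputable def ept {d : ℕ} (e : Edge d) : EuclideanSpace ℝ (Fin d) := WithLp.toLp 2 (emid e)

/-- A vertex as a point of Euclidean space. -/
noncomputable def vpt {d : ℕ} (x : Fin d → ℤ) : EuclideanSpace ℝ (Fin d) := WithLp.toLp 2 (fun j => (x j : ℝ))

lemma edist'_eq {d : ℕ} (e b : Edge d) : edist' e b = dist (ept e) (ept b) := by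
  rw [EuclideanSpace.dist_eq, edist']
  congr 1
  refine Finset.sum_congr rfl fun j _ => ?_
  rw [Real.dist_eq, sq_abs]; rfl

lemma evdist_eq {d : ℕ} (b : Edge d) (x : Fin d → ℤ) : evdist b x = dist (ept b) (vpt x) := by
  rw [EuclideanSpace.dist_eq, evdist]
  congr 1
  refine Finset.sum_congr rfl fun j _ => ?_
  rw [Real.dist_eq, sq_abs]; rfl

lemma edist'_nonneg {d : ℕ} (e b : Edge d) : 0 ≤ edist' e b := Real.sqrt_nonneg _
lemma evdist_nonneg' {d : ℕ} (b : Edge d) (x : Fin d → ℤ) : 0 ≤ evdist b x := Real.sqrt_nonneg _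

lemma evdist_triangle {d : ℕ} (e b : Edge d) (x : Fin d → ℤ) :
    evdist e x ≤ edist' e b + evdist b x := by
  rw [evdist_eq, evdist_eq, edist'_eq]; exact dist_triangle _ _ _

lemma half_le_evdist {d : ℕ} (b : Edge d) (x : Fin d → ℤ) : 1 / 2 ≤ evdist b x := by
  have h1 : (emid b b.2 - (x b.2 : ℝ)) ^ 2 ≤ ∑ j, (emid b j - (x j : ℝ)) ^ 2 :=
    Finset.single_le_sum (f := fun j => (emid b j - (x j : ℝ)) ^ 2)
      (fun j _ => sq_nonneg _) (Finset.mem_univ _)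
  have h2 : (1 / 2 : ℝ) ≤ |emid b b.2 - (x b.2 : ℝ)| := by
    have : emid b b.2 - (x b.2 : ℝ) = ((b.1 b.2 - x b.2 : ℤ) : ℝ) + 1 / 2 := by
      simp [emid]; push_cast; ring
    rw [this]
    set m : ℤ := b.1 b.2 - x b.2 with hm
    rcases le_or_gt 0 m with h | h
    · have : (0 : ℝ) ≤ (m : ℝ) := by exact_mod_cast h
      rw [abs_of_nonneg (by linarith)]; linarith
    · have hm1 : m ≤ -1 := by omega
      have : (m : ℝ) ≤ -1 := by exact_mod_cast hm1
      rw [abs_of_nonpos (by linarith)]; linarith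
  calc (1 / 2 : ℝ) ≤ |emid b b.2 - (x b.2 : ℝ)| := h2
    _ = Real.sqrt ((emid b b.2 - (x b.2 : ℝ)) ^ 2) := (Real.sqrt_sq_eq_abs _).symm
    _ ≤ evdist b x := Real.sqrt_le_sqrt h1

lemma coord_le_edist' {d : ℕ} (e b : Edge d) (j : Fin d) :
    |emid e j - emid b j| ≤ edist' e b := by
  rw [← Real.sqrt_sq_eq_abs]
  exact Real.sqrt_le_sqrt (Finset.single_le_sum
    (f := fun j => (emid e j - emid b j) ^ 2) (fun j _ => sq_nonneg _) (Finset.mem_univ _))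

/-- Counting lemma: the number of edges within distance `r` of `b` is at most
`d * (2r+3)^d`. -/
lemma count_ball {d : ℕ} (b : Edge d) (r : ℝ) (hr : 0 ≤ r) :
    ∑' e : Edge d, Set.indicator {e : Edge d | edist' e b ≤ r} (fun _ => (1 : ℝ≥0∞)) e
      ≤ ENNReal.ofReal (d * (2 * r + 3) ^ d) := by
  classical
  set lo : Fin d → ℤ := fun j => ⌈emid b j - (r + 1)⌉ with hlo
  set hi : Fin d → ℤ := fun j => ⌊emid b j + (r + 1)⌋ with hhi
  set Fs : Finset (Edge d) :=
    (Fintype.piFinset fun j => Finset.Icc (lo j) (hi j)) ×ˢ Finset.univ with hFs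
  have hsub : {e : Edge d | edist' e b ≤ r} ⊆ ↑Fs := by
    intro e he
    simp only [Set.mem_setOf_eq] at he
    simp only [hFs, Finset.coe_product, Set.mem_prod, Finset.mem_coe,
      Fintype.mem_piFinset, Finset.mem_Icc, Finset.mem_univ, and_true]
    intro j
    have h1 : |emid e j - emid b j| ≤ r := (coord_le_edist' e b j).trans he
    have h2 : |(e.1 j : ℝ) - emid b j| ≤ r + 1 / 2 := by
      have : (e.1 j : ℝ) - emid b j =
          (emid e j - emid b j) - (if j = e.2 then (1:ℝ) / 2 else 0) := by
        simp [emid]; ring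
      rw [this]
      refine (abs_sub _ _).trans ?_
      have : |if j = e.2 then (1:ℝ) / 2 else 0| ≤ 1 / 2 := by
        split <;> simp <;> norm_num [abs_of_nonneg]
      linarith
    rw [abs_le] at h2
    constructor
    · rw [hlo]; exact Int.ceil_le.2 (by linarith)
    · rw [hhi]; exact Int.le_floor.2 (by linarith)
  have hle : ∀ e : Edge d,
      Set.indicator {e : Edge d | edist' e b ≤ r} (fun _ => (1 : ℝ≥0∞)) e
        ≤ Set.indicator (↑Fs) (fun _ => (1 : ℝ≥0∞)) e :=
    fun e => Set.indicator_le_indicator_of_subset hsub (fun _ => zero_le) e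
  calc ∑' e : Edge d, Set.indicator {e : Edge d | edist' e b ≤ r} (fun _ => (1 : ℝ≥0∞)) e
      ≤ ∑' e : Edge d, Set.indicator (↑Fs) (fun _ => (1 : ℝ≥0∞)) e := ENNReal.tsum_le_tsum hle
    _ = ∑ e ∈ Fs, Set.indicator (↑Fs) (fun _ => (1 : ℝ≥0∞)) e :=
        tsum_eq_sum (fun e he => Set.indicator_of_notMem (by simpa using he) _)
    _ = ∑ e ∈ Fs, 1 := Finset.sum_congr rfl (fun e he => Set.indicator_of_mem (by simpa using he) _)
    _ = (Fs.card : ℝ≥0∞) := by simp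
    _ ≤ ENNReal.ofReal (d * (2 * r + 3) ^ d) := by
        rw [← ENNReal.ofReal_natCast]
        refine ENNReal.ofReal_le_ofReal ?_
        have hcard : Fs.card = (∏ j, (Finset.Icc (lo j) (hi j)).card) * d := by
          rw [hFs, Finset.card_product, Fintype.card_piFinset]
          simp
        rw [hcard]
        push_cast
        have hone : ∀ j : Fin d, ((Finset.Icc (lo j) (hi j)).card : ℝ) ≤ 2 * r + 3 := by
          intro j
          rw [Int.card_Icc]
          set m : ℤ := hi j + 1 - lo j with hm
          rcases le_or_gt 0 m with h | h
          · have h1 : ((m.toNat : ℤ) : ℝ) = (m : ℝ) := by rw [Int.toNat_of_nonneg h]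
            have h2 : ((hi j : ℝ)) ≤ emid b j + (r + 1) := Int.floor_le _
            have h3 : emid b j - (r + 1) ≤ (lo j : ℝ) := Int.le_ceil _
            have : (m : ℝ) ≤ 2 * r + 3 := by
              rw [hm]; push_cast; linarith
            calc ((m.toNat : ℕ) : ℝ) = ((m.toNat : ℤ) : ℝ) := by push_cast; ring
              _ = (m : ℝ) := h1
              _ ≤ 2 * r + 3 := this
          · have : m.toNat = 0 := Int.toNat_of_nonpos (by omega)
            rw [this]; push_cast; linarith
        calc (∏ j, ((Finset.Icc (lo j) (hi j)).card : ℝ)) * (d : ℝ)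
            ≤ (∏ j : Fin d, (2 * r + 3)) * (d : ℝ) := by
              refine mul_le_mul_of_nonneg_right ?_ (by positivity)
              exact Finset.prod_le_prod (fun j _ => by positivity) (fun j _ => hone j)
          _ = (2 * r + 3) ^ d * d := by rw [Finset.prod_const, Finset.card_univ, Fintype.card_fin]
          _ = d * (2 * r + 3) ^ d := by ring

/-- Tail summation estimate (dyadic shell decomposition). -/
lemma tail_sum (d : ℕ) (hd : 1 ≤ d) (s : ℝ) (hs : s + d < 0) :
    ∃ C : ℝ, 0 ≤ C ∧ ∀ (b : Edge d) (R : ℝ), 1 / 2 ≤ R →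
      ∑' e : Edge d, Set.indicator {e : Edge d | R / 2 ≤ edist' e b}
          (fun e => ENNReal.ofReal ((edist' e b + 1) ^ s)) e
        ≤ ENNReal.ofReal (C * R ^ (s + d)) := by
  have hd1 : (1 : ℝ) ≤ d := by exact_mod_cast hd
  have hs0 : s < 0 := by linarith
  set q : ℝ := (2 : ℝ) ^ s * 2 ^ d with hqdef
  have hq0 : 0 < q := by positivity
  have hq1 : q < 1 := by
    have : q = (2 : ℝ) ^ (s + (d : ℝ)) := by
      rw [Real.rpow_add (by norm_num), Real.rpow_natCast]
    rw [this]
    exact Real.rpow_lt_one_of_one_lt_of_neg (by norm_num) hs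
  refine ⟨(d : ℝ) * 8 ^ d * 2 ^ (-s) * (1 - q)⁻¹,
    mul_nonneg (by positivity) (inv_nonneg.2 (by linarith)), fun b R hR => ?_⟩
  have hR2 : (0 : ℝ) < R / 2 := by linarith
  have hRpos : (0 : ℝ) < R := by linarith
  set S : ℕ → Set (Edge d) := fun k =>
    {e | 2 ^ k * (R / 2) ≤ edist' e b ∧ edist' e b < 2 ^ (k + 1) * (R / 2)} with hS
  -- pointwise domination by the shell decomposition
  have key : ∀ e : Edge d,
      Set.indicator {e : Edge d | R / 2 ≤ edist' e b}
          (fun e => ENNReal.ofReal ((edist' e b + 1) ^ s)) e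
        ≤ ∑' k : ℕ, Set.indicator (S k)
            (fun _ => ENNReal.ofReal ((2 ^ k * (R / 2)) ^ s)) e := by
    intro e
    by_cases he : e ∈ {e : Edge d | R / 2 ≤ edist' e b}
    · rw [Set.indicator_of_mem he]
      have ht : R / 2 ≤ edist' e b := he
      have hex : ∃ n : ℕ, edist' e b < 2 ^ n * (R / 2) := by
        obtain ⟨n, hn⟩ := pow_unbounded_of_one_lt (edist' e b / (R / 2)) (y := (2:ℝ)) one_lt_two
        exact ⟨n, by rw [div_lt_iff₀ hR2] at hn; linarith [hn]⟩
      classical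
      set n := Nat.find hex with hn
      have hn0 : n ≠ 0 := by
        intro h0
        have := Nat.find_spec hex
        rw [← hn, h0] at this
        simp at this
        linarith
      obtain ⟨k, hk⟩ : ∃ k, n = k + 1 := ⟨n - 1, by omega⟩
      have hk1 : 2 ^ k * (R / 2) ≤ edist' e b := by
        by_contra hcon
        push_neg at hcon
        exact Nat.find_min hex (by omega) hcon
      have hk2 : edist' e b < 2 ^ (k + 1) * (R / 2) := by
        have := Nat.find_spec hex
        rwa [← hn, hk] at this
      have hmem : e ∈ S k := ⟨hk1, hk2⟩
      calc ENNReal.ofReal ((edist' e b + 1) ^ s)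
          ≤ ENNReal.ofReal ((2 ^ k * (R / 2)) ^ s) := by
            refine ENNReal.ofReal_le_ofReal ?_
            exact Real.rpow_le_rpow_of_nonpos (by positivity) (by linarith) (le_of_lt hs0)
        _ = Set.indicator (S k)
            (fun _ => ENNReal.ofReal ((2 ^ k * (R / 2)) ^ s)) e :=
            (Set.indicator_of_mem hmem (fun _ => ENNReal.ofReal ((2 ^ k * (R / 2)) ^ s))).symm
        _ ≤ ∑' k : ℕ, Set.indicator (S k)
              (fun _ => ENNReal.ofReal ((2 ^ k * (R / 2)) ^ s)) e := ENNReal.le_tsum k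
    · rw [Set.indicator_of_notMem he]
      exact zero_le
  set A : ℝ := (d : ℝ) * 8 ^ d * (R / 2) ^ s * R ^ d with hA
  have hA0 : 0 ≤ A := by positivity
  calc ∑' e : Edge d, Set.indicator {e : Edge d | R / 2 ≤ edist' e b}
          (fun e => ENNReal.ofReal ((edist' e b + 1) ^ s)) e
      ≤ ∑' (e : Edge d) (k : ℕ), Set.indicator (S k)
          (fun _ => ENNReal.ofReal ((2 ^ k * (R / 2)) ^ s)) e := ENNReal.tsum_le_tsum key
    _ = ∑' (k : ℕ) (e : Edge d), Set.indicator (S k)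
          (fun _ => ENNReal.ofReal ((2 ^ k * (R / 2)) ^ s)) e := ENNReal.tsum_comm
    _ ≤ ∑' k : ℕ, ENNReal.ofReal (A * q ^ k) := by
        refine ENNReal.tsum_le_tsum fun k => ?_
        have step1 : ∀ e : Edge d, Set.indicator (S k)
            (fun _ => ENNReal.ofReal ((2 ^ k * (R / 2)) ^ s)) e
            = ENNReal.ofReal ((2 ^ k * (R / 2)) ^ s) *
              Set.indicator (S k) (fun _ => (1 : ℝ≥0∞)) e := by
          intro e
          by_cases h : e ∈ S k <;> simp [h]
        have hsub : S k ⊆ {e : Edge d | edist' e b ≤ 2 ^ (k + 1) * (R / 2)} :=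
          fun e he => le_of_lt he.2
        calc ∑' e : Edge d, Set.indicator (S k)
              (fun _ => ENNReal.ofReal ((2 ^ k * (R / 2)) ^ s)) e
            = ENNReal.ofReal ((2 ^ k * (R / 2)) ^ s) *
              ∑' e : Edge d, Set.indicator (S k) (fun _ => (1 : ℝ≥0∞)) e := by
              rw [← ENNReal.tsum_mul_left]; exact tsum_congr step1
          _ ≤ ENNReal.ofReal ((2 ^ k * (R / 2)) ^ s) *
              ENNReal.ofReal (d * (2 * (2 ^ (k + 1) * (R / 2)) + 3) ^ d) := by
              refine mul_le_mul_right ?_ _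
              refine le_trans (ENNReal.tsum_le_tsum fun e =>
                Set.indicator_le_indicator_of_subset hsub (fun _ => zero_le) e) ?_
              exact count_ball b _ (by positivity)
          _ = ENNReal.ofReal ((2 ^ k * (R / 2)) ^ s *
                (d * (2 * (2 ^ (k + 1) * (R / 2)) + 3) ^ d)) := by
              rw [← ENNReal.ofReal_mul (by positivity)]
          _ ≤ ENNReal.ofReal (A * q ^ k) := by
              refine ENNReal.ofReal_le_ofReal ?_
              have hpk : (1 : ℝ) ≤ 2 ^ k := one_le_pow₀ (by norm_num)
              have hbase : 2 * (2 ^ (k + 1) * (R / 2)) + 3 ≤ 8 * (2 ^ k * R) := by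
                have h1 : (1 : ℝ) / 2 ≤ 2 ^ k * R := by nlinarith
                have h2 : (2 : ℝ) ^ (k + 1) = 2 * 2 ^ k := by ring
                nlinarith
              have e1 : ((2:ℝ) ^ k * (R / 2)) ^ s = ((2:ℝ) ^ s) ^ k * (R / 2) ^ s := by
                rw [Real.mul_rpow (by positivity) (by positivity)]
                congr 1
                rw [← Real.rpow_natCast (2:ℝ) k, ← Real.rpow_natCast ((2:ℝ) ^ s) k,
                  ← Real.rpow_mul (by norm_num), ← Real.rpow_mul (by norm_num), mul_comm]
              have e2 : (8 * ((2:ℝ) ^ k * R)) ^ d = 8 ^ d * ((2:ℝ) ^ d) ^ k * R ^ d := by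
                rw [mul_pow, mul_pow, ← pow_mul, ← pow_mul, Nat.mul_comm]; ring
              calc ((2:ℝ) ^ k * (R / 2)) ^ s * (d * (2 * (2 ^ (k + 1) * (R / 2)) + 3) ^ d)
                  ≤ ((2:ℝ) ^ k * (R / 2)) ^ s * (d * (8 * (2 ^ k * R)) ^ d) := by
                    refine mul_le_mul_of_nonneg_left ?_ (by positivity)
                    refine mul_le_mul_of_nonneg_left ?_ (by positivity)
                    exact pow_le_pow_left₀ (by positivity) hbase d
                _ = A * q ^ k := by
                    rw [e1, e2, hA, hqdef, mul_pow]
                    ring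
    _ = ENNReal.ofReal A * ∑' k : ℕ, (ENNReal.ofReal q) ^ k := by
        rw [← ENNReal.tsum_mul_left]
        refine tsum_congr fun k => ?_
        rw [← ENNReal.ofReal_pow (le_of_lt hq0), ← ENNReal.ofReal_mul hA0]
    _ = ENNReal.ofReal A * ENNReal.ofReal ((1 - q)⁻¹) := by
        rw [ENNReal.tsum_geometric]
        congr 1
        rw [ENNReal.ofReal_inv_of_pos (by linarith)]
        congr 1
        rw [ENNReal.ofReal_sub _ (le_of_lt hq0), ENNReal.ofReal_one]
    _ ≤ ENNReal.ofReal ((d : ℝ) * 8 ^ d * 2 ^ (-s) * (1 - q)⁻¹ * R ^ (s + d)) := by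
        rw [← ENNReal.ofReal_mul hA0]
        refine ENNReal.ofReal_le_ofReal (le_of_eq ?_)
        have e3 : (R / 2) ^ s * (R : ℝ) ^ d = 2 ^ (-s) * R ^ (s + d) := by
          rw [Real.div_rpow (le_of_lt hRpos) (by norm_num), ← Real.rpow_natCast R d,
            Real.rpow_neg (by norm_num), Real.rpow_add hRpos]
          field_simp
        rw [hA]
        calc (d : ℝ) * 8 ^ d * (R / 2) ^ s * R ^ d * (1 - q)⁻¹
            = (d : ℝ) * 8 ^ d * ((R / 2) ^ s * R ^ d) * (1 - q)⁻¹ := by ring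
          _ = (d : ℝ) * 8 ^ d * (2 ^ (-s) * R ^ (s + d)) * (1 - q)⁻¹ := by rw [e3]
          _ = (d : ℝ) * 8 ^ d * 2 ^ (-s) * (1 - q)⁻¹ * R ^ (s + d) := by ring

/-- From an `ℝ≥0∞` bound to a real bound on a `tsum` of a nonnegative function. -/
lemma tsum_real_le_of_ofReal {α : Type*} {g : α → ℝ} (hg : ∀ a, 0 ≤ g a) {c : ℝ} (hc : 0 ≤ c)
    (h : ∑' a, ENNReal.ofReal (g a) ≤ ENNReal.ofReal c) : ∑' a, g a ≤ c := by
  by_cases hs : Summable g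
  · rw [← ENNReal.ofReal_le_ofReal_iff hc, ENNReal.ofReal_tsum_of_nonneg hg hs]
    exact h
  · rw [tsum_eq_zero_of_not_summable hs]
    exact hc

end Aux

/-- Weighted lattice summation estimate over edges `e` with `|e−b| ≥ |b−x|/2`. -/
theorem weighted_edge_sum_estimate (d : ℕ) (hd : 1 ≤ d) (p β : ℝ)
    (hp : 1 ≤ p) (hβ : 0 < β) (hexp : 2 * p * (β - d) + d < 0) :
    ∃ C : ℝ, ∀ (x : Fin d → ℤ) (b : Edge d),
      ∑' e : Edge d,
          Set.indicator {e : Edge d | evdist b x / 2 ≤ edist' e b}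
            (fun e => (evdist e x + 1) ^ (2 * p * β) * (edist' e b + 1) ^ (-(2 * p * d))) e
        ≤ C * (evdist b x + 1) ^ (2 * p * (β - d) + d) := by
  set s : ℝ := 2 * p * (β - d) with hsdef
  have hsd : s + d < 0 := hexp
  obtain ⟨C₀, hC₀, htail⟩ := tail_sum d hd s hsd
  set C : ℝ := 3 ^ (2 * p * β) * (C₀ * 3 ^ (-(s + (d:ℝ)))) with hC
  have hCnn : 0 ≤ C := by positivity
  refine ⟨C, fun x b => ?_⟩
  set R : ℝ := evdist b x with hR
  have hRhalf : 1 / 2 ≤ R := half_le_evdist b x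
  have hRpos : 0 < R := by linarith
  set region : Set (Edge d) := {e : Edge d | R / 2 ≤ edist' e b} with hregion
  set w : Edge d → ℝ :=
    fun e => (evdist e x + 1) ^ (2 * p * β) * (edist' e b + 1) ^ (-(2 * p * d)) with hw
  have hwnn : ∀ e, 0 ≤ w e := fun e =>
    mul_nonneg (Real.rpow_nonneg (by linarith [evdist_nonneg' e x]) _)
      (Real.rpow_nonneg (by linarith [edist'_nonneg e b]) _)
  have hgnn : ∀ e, 0 ≤ Set.indicator region w e := fun e =>
    Set.indicator_nonneg (fun e _ => hwnn e) e
  have hcnn : 0 ≤ C * (R + 1) ^ (s + d) := by positivity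
  refine tsum_real_le_of_ofReal hgnn hcnn ?_
  -- pointwise bound in ℝ≥0∞
  have hpb : (0:ℝ) ≤ 2 * p * β := by positivity
  have hpoint : ∀ e : Edge d,
      ENNReal.ofReal (Set.indicator region w e)
        ≤ ENNReal.ofReal ((3:ℝ) ^ (2 * p * β)) *
          Set.indicator region (fun e => ENNReal.ofReal ((edist' e b + 1) ^ s)) e := by
    intro e
    by_cases he : e ∈ region
    · rw [Set.indicator_of_mem he, Set.indicator_of_mem he,
        ← ENNReal.ofReal_mul (by positivity)]
      refine ENNReal.ofReal_le_ofReal ?_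
      have hte : R / 2 ≤ edist' e b := he
      have ht0 : 0 ≤ edist' e b := edist'_nonneg e b
      have h1 : evdist e x + 1 ≤ 3 * (edist' e b + 1) := by
        have := evdist_triangle e b x
        rw [← hR] at this
        nlinarith
      have h2 : (evdist e x + 1) ^ (2 * p * β) ≤
          (3:ℝ) ^ (2 * p * β) * (edist' e b + 1) ^ (2 * p * β) := by
        rw [← Real.mul_rpow (by norm_num) (by linarith)]
        exact Real.rpow_le_rpow (by linarith [evdist_nonneg' e x]) h1 hpb
      calc w e ≤ (3:ℝ) ^ (2 * p * β) * (edist' e b + 1) ^ (2 * p * β) *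
              (edist' e b + 1) ^ (-(2 * p * d)) := by
            rw [hw]
            exact mul_le_mul_of_nonneg_right h2 (Real.rpow_nonneg (by linarith) _)
        _ = (3:ℝ) ^ (2 * p * β) * (edist' e b + 1) ^ s := by
            rw [mul_assoc, ← Real.rpow_add (by linarith)]
            congr 2
            rw [hsdef]; ring
    · rw [Set.indicator_of_notMem he, Set.indicator_of_notMem he]
      simp
  calc ∑' e : Edge d, ENNReal.ofReal (Set.indicator region w e)
      ≤ ∑' e : Edge d, ENNReal.ofReal ((3:ℝ) ^ (2 * p * β)) *
          Set.indicator region (fun e => ENNReal.ofReal ((edist' e b + 1) ^ s)) e :=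
        ENNReal.tsum_le_tsum hpoint
    _ = ENNReal.ofReal ((3:ℝ) ^ (2 * p * β)) *
        ∑' e : Edge d, Set.indicator region
          (fun e => ENNReal.ofReal ((edist' e b + 1) ^ s)) e := ENNReal.tsum_mul_left
    _ ≤ ENNReal.ofReal ((3:ℝ) ^ (2 * p * β)) * ENNReal.ofReal (C₀ * R ^ (s + d)) :=
        mul_le_mul_right (htail b R hRhalf) _
    _ ≤ ENNReal.ofReal (C * (R + 1) ^ (s + d)) := by
        rw [← ENNReal.ofReal_mul (by positivity)]
        refine ENNReal.ofReal_le_ofReal ?_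
        have h3 : R ^ (s + d) ≤ 3 ^ (-(s + (d:ℝ))) * (R + 1) ^ (s + d) := by
          have h4 : (R + 1) / 3 ≤ R := by linarith
          have h5 : (0:ℝ) < (R + 1) / 3 := by linarith
          calc R ^ (s + d) ≤ ((R + 1) / 3) ^ (s + d) :=
              Real.rpow_le_rpow_of_nonpos h5 h4 (le_of_lt hsd)
            _ = 3 ^ (-(s + (d:ℝ))) * (R + 1) ^ (s + d) := by
              rw [Real.div_rpow (by linarith) (by norm_num), Real.rpow_neg (by norm_num)]
              ring
        calc (3:ℝ) ^ (2 * p * β) * (C₀ * R ^ (s + d))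
            ≤ (3:ℝ) ^ (2 * p * β) * (C₀ * (3 ^ (-(s + (d:ℝ))) * (R + 1) ^ (s + d))) := by
              refine mul_le_mul_of_nonneg_left ?_ (by positivity)
              exact mul_le_mul_of_nonneg_left h3 hC₀
          _ = C * (R + 1) ^ (s + d) := by rw [hC]; ring
end
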